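/- arXiv:1904.01817 — 5 statements merged into one kernel-verified Lean document; each statement's English description precedes it below -/
import Mathlib

section
/- Let X_1, X_2, ... be iid Pareto(γ) random variables with 0 < γ < 1, S_m = ∑_{i≤m} X_i and M_m = max_{i≤m} X_i. Then the family {S_m / M_m}_{m≥1} is tight. -/
open MeasureTheory ProbabilityTheory
open scoped ENNReal

/-- The maximum of `f 0, …, f (m-1)` (junk value `0` if `m = 0`). -/
noncomputable def firstMax (m : ℕ) (f : ℕ → ℝ) : ℝ :=
  if hm : 1 ≤ m then
    (Finset.range m).sup' (Finset.nonempty_range_iff.mpr (by omega)) f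
  else 0

private lemma ofReal_sum_le {ι : Type*} (s : Finset ι) (f : ι → ℝ) :
    ENNReal.ofReal (∑ i ∈ s, f i) ≤ ∑ i ∈ s, ENNReal.ofReal (f i) := by
  classical
  induction s using Finset.induction with
  | empty => simp
  | @insert a s h ih =>
    rw [Finset.sum_insert h, Finset.sum_insert h]
    exact le_trans ENNReal.ofReal_add_le (by gcongr)

private lemma meas_rpow_neg (γ : ℝ) : Measurable fun t : ℝ => t ^ (-γ) := by
  measurability

private lemma div_bound_aux (b C K a cg : ℝ) (hC : 0 < C) (hK : 0 < K) (ha : 0 < a)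
    (hab : b ≤ cg * a) : b*C/(K/2*a) ≤ 2*cg*C/K := by
  rw [div_le_div_iff₀ (by positivity) (by positivity)]
  nlinarith [mul_le_mul_of_nonneg_right hab (mul_nonneg hC.le hK.le)]

private lemma markov_aux {Ω : Type*} [MeasurableSpace Ω] (μ : Measure Ω) (f : Ω → ℝ)
    (hf : Measurable f) (t : ℝ) (ht : 0 < t) :
    μ {ω | t < f ω} ≤ (∫⁻ ω, ENNReal.ofReal (f ω) ∂μ) / ENNReal.ofReal t := by
  refine le_trans (measure_mono ?_)
    (meas_ge_le_lintegral_div (ENNReal.measurable_ofReal.comp hf).aemeasurable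
      (ENNReal.ofReal_pos.mpr ht).ne' ENNReal.ofReal_ne_top)
  intro ω hω
  exact ENNReal.ofReal_le_ofReal (le_of_lt hω)

set_option maxHeartbeats 1000000 in
/-- For iid Pareto(γ) random variables with `0 < γ < 1`, the family `{S_m / M_m}_{m ≥ 1}`
of sums divided by maxima is tight. -/
theorem sum_div_max_tight {Ω : Type*} [MeasurableSpace Ω] (μ : Measure Ω)
    [IsProbabilityMeasure μ] (γ : ℝ) (hγ0 : 0 < γ) (hγ1 : γ < 1)
    (X : ℕ → Ω → ℝ) (hmeas : ∀ i, Measurable (X i))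
    (hindep : iIndepFun X μ)
    (htail : ∀ i, ∀ s : ℝ, 1 ≤ s → μ {ω | s < X i ω} = ENNReal.ofReal (s ^ (-γ))) :
    ∀ ε : ℝ, 0 < ε → ∃ K : ℝ, ∀ m : ℕ, 1 ≤ m →
      μ {ω | K < (∑ i ∈ Finset.range m, X i ω) / firstMax m fun i => X i ω}
        ≤ ENNReal.ofReal ε := by
  intro ε hε
  have hγ1' : (0:ℝ) < 1 - γ := by linarith
  set c : ℝ := max 1 (Real.log (3/ε)) with hc_def
  have hc1 : 1 ≤ c := le_max_left _ _
  have hc0 : 0 < c := lt_of_lt_of_le one_pos hc1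
  set C : ℝ := 1 + 1/(1-γ) with hC_def
  have hC0 : 0 < C := by
    have : 0 < 1/(1-γ) := by positivity
    rw [hC_def]; linarith
  set cg : ℝ := c ^ (1/γ) with hcg_def
  have hcg1 : 1 ≤ cg := Real.one_le_rpow hc1 (by positivity)
  have hcg0 : 0 < cg := lt_of_lt_of_le one_pos hcg1
  set K : ℝ := 6 * (1 + cg * C) / ε with hK_def
  have hK0 : 0 < K := by
    apply div_pos _ hε
    nlinarith
  have hεK : ε * K = 6 * (1 + cg * C) := by
    rw [hK_def]; field_simp
  have hK1 : 2 / K ≤ ε / 3 := by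
    rw [div_le_div_iff₀ hK0 (by norm_num)]
    nlinarith
  have hK2 : 2 * cg * C / K ≤ ε / 3 := by
    rw [div_le_div_iff₀ hK0 (by norm_num)]
    nlinarith
  refine ⟨K, ?_⟩
  intro m hm
  have hm0 : (0:ℝ) < m := by exact_mod_cast Nat.lt_of_lt_of_le Nat.zero_lt_one hm
  have hm1 : (1:ℝ) ≤ m := by exact_mod_cast hm
  -- complementary probabilities
  have hle : ∀ i, ∀ s : ℝ, 1 ≤ s →
      μ {ω | X i ω ≤ s} = 1 - ENNReal.ofReal (s ^ (-γ)) := by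
    intro i s hs
    have h1 : {ω | X i ω ≤ s} = {ω | s < X i ω}ᶜ := by ext ω; simp
    rw [h1, prob_compl_eq_one_sub (measurableSet_lt measurable_const (hmeas i)),
      htail i s hs]
  have hnull : ∀ i, μ {ω | X i ω ≤ 1} = 0 := by
    intro i
    rw [hle i 1 le_rfl, Real.one_rpow, ENNReal.ofReal_one, tsub_self]
  have hXgt1 : ∀ i, ∀ᵐ ω ∂μ, 1 < X i ω := by
    intro i
    rw [ae_iff]
    convert hnull i using 2
    ext ω; simp
  set b : ℝ := (m:ℝ) ^ (1/γ) with hb_def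
  have hb1 : 1 ≤ b := Real.one_le_rpow hm1 (by positivity)
  have hb0 : 0 < b := lt_of_lt_of_le one_pos hb1
  set a : ℝ := max 1 (((m:ℝ)/c) ^ (1/γ)) with ha_def
  have ha1 : 1 ≤ a := le_max_left _ _
  have ha0 : 0 < a := lt_of_lt_of_le one_pos ha1
  have hinvγ : (1/γ) * (-γ) = -1 := by field_simp
  have hbγ : b ^ (-γ) = 1/(m:ℝ) := by
    rw [hb_def, ← Real.rpow_mul (le_of_lt hm0), hinvγ, Real.rpow_neg_one, one_div]
  have hab : b ≤ cg * a := by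
    have h1 : cg * ((m:ℝ)/c) ^ (1/γ) = b := by
      rw [hcg_def, hb_def, ← Real.mul_rpow (le_of_lt hc0) (by positivity)]
      congr 1
      field_simp
    calc b = cg * ((m:ℝ)/c) ^ (1/γ) := h1.symm
      _ ≤ cg * a := by
          exact mul_le_mul_of_nonneg_left (le_max_right _ _) (le_of_lt hcg0)
  have hmb : (m:ℝ) ≤ b := by
    calc (m:ℝ) = (m:ℝ) ^ (1:ℝ) := (Real.rpow_one _).symm
      _ ≤ (m:ℝ) ^ (1/γ) := by
          apply Real.rpow_le_rpow_of_exponent_le hm1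
          rw [le_div_iff₀ hγ0]
          linarith
  have hbb : (m:ℝ) * b ^ (1-γ) = b := by
    rw [hb_def, ← Real.rpow_mul (le_of_lt hm0)]
    nth_rewrite 1 [← Real.rpow_one (m:ℝ)]
    rw [← Real.rpow_add hm0]
    congr 1
    field_simp
    ring
  -- the auxiliary random variables
  set N : Ω → ℝ := fun ω => ∑ i ∈ Finset.range m, (if b < X i ω then (1:ℝ) else 0)
    with hN_def
  set T : Ω → ℝ := fun ω => ∑ i ∈ Finset.range m, min (X i ω) b with hT_def
  set E1 : Set Ω := ⋂ i ∈ Finset.range m, {ω | X i ω ≤ a} with hE1_def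
  set E2 : Set Ω := {ω | K/2 < N ω} with hE2_def
  set E3 : Set Ω := {ω | K/2 * a < T ω} with hE3_def
  set G : Set Ω := {ω | ∀ i, 1 < X i ω} with hG_def
  have hGc : μ Gᶜ = 0 := by
    have h1 : ∀ᵐ ω ∂μ, ∀ i, 1 < X i ω := ae_all_iff.mpr hXgt1
    rw [ae_iff] at h1
    convert h1 using 2
    rfl
  -- the inclusion
  have hincl : {ω | K < (∑ i ∈ Finset.range m, X i ω) / firstMax m fun i => X i ω}
      ⊆ (E1 ∪ E2 ∪ E3) ∪ Gᶜ := by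
    intro ω hA
    by_cases hG' : ω ∈ G
    case neg => exact Or.inr hG'
    left
    by_cases h1 : ω ∈ E1
    · exact Or.inl (Or.inl h1)
    by_cases h2 : ω ∈ E2
    · exact Or.inl (Or.inr h2)
    by_cases h3 : ω ∈ E3
    · exact Or.inr h3
    exfalso
    have hMx' : firstMax m (fun i => X i ω)
        = (Finset.range m).sup' (Finset.nonempty_range_iff.mpr (by omega)) (fun i => X i ω) :=
      dif_pos hm
    set Mx : ℝ := firstMax m (fun i => X i ω) with hMx_def
    have hle_M : ∀ i ∈ Finset.range m, X i ω ≤ Mx := by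
      intro i hi
      exact (Finset.le_sup' (fun j => X j ω) hi).trans hMx'.symm.le
    rw [hE1_def, Set.mem_iInter₂] at h1
    push_neg at h1
    obtain ⟨i₀, hi₀, hia⟩ := h1
    have haM : a < Mx := lt_of_lt_of_le (not_le.mp hia) (hle_M i₀ hi₀)
    have hMx0 : 0 < Mx := by linarith
    have hS : K * Mx < ∑ i ∈ Finset.range m, X i ω := (lt_div_iff₀ hMx0).mp hA
    have hsum : (∑ i ∈ Finset.range m, X i ω) ≤ T ω + N ω * Mx := by
      have hterm : ∀ i ∈ Finset.range m,
          X i ω ≤ min (X i ω) b + (if b < X i ω then (1:ℝ) else 0) * Mx := by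
        intro i hi
        by_cases hb' : b < X i ω
        · rw [min_eq_right hb'.le, if_pos hb', one_mul]
          have := hle_M i hi
          linarith
        · rw [min_eq_left (not_lt.mp hb'), if_neg hb', zero_mul, add_zero]
      calc (∑ i ∈ Finset.range m, X i ω)
          ≤ ∑ i ∈ Finset.range m,
            (min (X i ω) b + (if b < X i ω then (1:ℝ) else 0) * Mx) :=
            Finset.sum_le_sum hterm
        _ = T ω + N ω * Mx := by
            rw [Finset.sum_add_distrib, ← Finset.sum_mul, hT_def, hN_def]
    have hN2 : N ω ≤ K/2 := not_lt.mp h2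
    have hT3 : T ω ≤ K/2 * a := not_lt.mp h3
    nlinarith [mul_le_mul_of_nonneg_right hN2 hMx0.le,
      mul_lt_mul_of_pos_left haM (by positivity : (0:ℝ) < K/2)]
  -- bound on E1
  have hE1 : μ E1 ≤ ENNReal.ofReal (ε/3) := by
    have hprod : μ E1 = ∏ i ∈ Finset.range m, μ {ω | X i ω ≤ a} := by
      rw [hE1_def]
      exact hindep.meas_biInter (fun i _ => ⟨Set.Iic a, measurableSet_Iic, rfl⟩)
    rw [hprod]
    rcases le_or_gt (((m:ℝ)/c) ^ (1/γ)) 1 with hcase | hcase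
    · have ha' : a = 1 := by rw [ha_def]; exact max_eq_left hcase
      have h0 : μ {ω | X 0 ω ≤ a} = 0 := by rw [ha']; exact hnull 0
      rw [Finset.prod_eq_zero (Finset.mem_range.mpr hm) h0]
      exact zero_le
    · have ha' : a = ((m:ℝ)/c) ^ (1/γ) := by rw [ha_def]; exact max_eq_right hcase.le
      have haγ : a ^ (-γ) = c/(m:ℝ) := by
        rw [ha', ← Real.rpow_mul (by positivity), hinvγ, Real.rpow_neg_one, inv_div]
      have hfac : ∀ i ∈ Finset.range m,
          μ {ω | X i ω ≤ a} ≤ ENNReal.ofReal (Real.exp (-(c/(m:ℝ)))) := by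
        intro i _
        rw [hle i a ha1, haγ]
        have heq : ENNReal.ofReal (1 - c/(m:ℝ)) = 1 - ENNReal.ofReal (c/(m:ℝ)) := by
          rw [ENNReal.ofReal_sub _ (by positivity), ENNReal.ofReal_one]
        rw [← heq]
        apply ENNReal.ofReal_le_ofReal
        have := Real.add_one_le_exp (-(c/(m:ℝ)))
        linarith
      calc (∏ i ∈ Finset.range m, μ {ω | X i ω ≤ a})
          ≤ ∏ _i ∈ Finset.range m, ENNReal.ofReal (Real.exp (-(c/(m:ℝ)))) :=
            Finset.prod_le_prod' hfac
        _ = ENNReal.ofReal (Real.exp (-(c/(m:ℝ)))) ^ m := by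
            rw [Finset.prod_const, Finset.card_range]
        _ = ENNReal.ofReal (Real.exp (-(c/(m:ℝ))) ^ m) :=
            (ENNReal.ofReal_pow (Real.exp_nonneg _) m).symm
        _ ≤ ENNReal.ofReal (ε/3) := by
            apply ENNReal.ofReal_le_ofReal
            rw [← Real.exp_nat_mul]
            have hexp : (m:ℝ) * (-(c/(m:ℝ))) = -c := by field_simp
            rw [hexp]
            calc Real.exp (-c) ≤ Real.exp (-(Real.log (3/ε))) :=
                  Real.exp_le_exp.mpr (neg_le_neg (le_max_right _ _))
              _ = ε/3 := by
                  rw [Real.exp_neg, Real.exp_log (by positivity), inv_div]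
  -- bound on E2
  have hNmeas : Measurable N := by
    apply Finset.measurable_sum
    intro i _
    exact Measurable.ite (measurableSet_lt measurable_const (hmeas i))
      measurable_const measurable_const
  have hE2 : μ E2 ≤ ENNReal.ofReal (ε/3) := by
    have hmark := markov_aux μ N hNmeas (K/2) (by positivity)
    have hint : (∫⁻ ω, ENNReal.ofReal (N ω) ∂μ) = 1 := by
      have h1 : ∀ ω, ENNReal.ofReal (N ω)
          = ∑ i ∈ Finset.range m, ENNReal.ofReal (if b < X i ω then (1:ℝ) else 0) := by
        intro ω
        rw [hN_def]
        exact ENNReal.ofReal_sum_of_nonneg (fun i _ => by positivity)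
      simp_rw [h1]
      rw [lintegral_finset_sum]
      · have heach : ∀ i ∈ Finset.range m,
            (∫⁻ ω, ENNReal.ofReal (if b < X i ω then (1:ℝ) else 0) ∂μ)
              = ENNReal.ofReal (1/(m:ℝ)) := by
          intro i _
          have h2 : (∫⁻ ω, ENNReal.ofReal (if b < X i ω then (1:ℝ) else 0) ∂μ)
              = μ {ω | b < X i ω} := by
            rw [← lintegral_indicator_one (measurableSet_lt measurable_const (hmeas i))]
            apply lintegral_congr
            intro ω
            by_cases hh : b < X i ω <;>
              simp [Set.indicator_apply, Set.mem_setOf_eq, hh]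
          rw [h2, htail i b hb1, hbγ]
        rw [Finset.sum_congr rfl heach, Finset.sum_const, Finset.card_range, nsmul_eq_mul,
          ← ENNReal.ofReal_natCast m, ← ENNReal.ofReal_mul (by positivity),
          mul_one_div, div_self (ne_of_gt hm0), ENNReal.ofReal_one]
      · intro i _
        exact ENNReal.measurable_ofReal.comp (Measurable.ite
          (measurableSet_lt measurable_const (hmeas i)) measurable_const measurable_const)
    calc μ E2 ≤ (∫⁻ ω, ENNReal.ofReal (N ω) ∂μ) / ENNReal.ofReal (K/2) := hmark
      _ = 1 / ENNReal.ofReal (K/2) := by rw [hint]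
      _ = ENNReal.ofReal (2/K) := by
          rw [one_div, ← ENNReal.ofReal_inv_of_pos (by positivity)]
          congr 1
          rw [inv_div]
      _ ≤ ENNReal.ofReal (ε/3) := ENNReal.ofReal_le_ofReal hK1
  -- bound on E3
  have hTi : ∀ i, (∫⁻ ω, ENNReal.ofReal (min (X i ω) b) ∂μ)
      ≤ ENNReal.ofReal (1 + b^(1-γ)/(1-γ)) := by
    intro i
    have hnn : 0 ≤ᵐ[μ] fun ω => min (X i ω) b := by
      filter_upwards [hXgt1 i] with ω hω
      simp only [Pi.zero_apply]
      exact le_min (by linarith) (by linarith)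
    have hmble : AEMeasurable (fun ω => min (X i ω) b) μ :=
      ((hmeas i).min measurable_const).aemeasurable
    rw [lintegral_eq_lintegral_meas_lt μ hnn hmble]
    set h : ℝ → ℝ≥0∞ := fun t => (Set.Ioc (0:ℝ) 1).indicator (fun _ => (1:ℝ≥0∞)) t
      + (Set.Ioc (1:ℝ) b).indicator (fun t => ENNReal.ofReal (t ^ (-γ))) t with hh_def
    have hhm1 : Measurable ((Set.Ioc (0:ℝ) 1).indicator (fun _ => (1:ℝ≥0∞))) :=
      measurable_const.indicator measurableSet_Ioc
    have hhm2 : Measurable ((Set.Ioc (1:ℝ) b).indicator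
        (fun t => ENNReal.ofReal (t ^ (-γ)))) := by
      exact (ENNReal.measurable_ofReal.comp (meas_rpow_neg γ)).indicator measurableSet_Ioc
    have hhm : Measurable h := hhm1.add hhm2
    have hpt : ∀ t ∈ Set.Ioi (0:ℝ), μ {ω | t < min (X i ω) b} ≤ h t := by
      intro t ht
      rw [Set.mem_Ioi] at ht
      by_cases h1 : t ≤ 1
      · have : h t = 1 + (Set.Ioc (1:ℝ) b).indicator
            (fun t => ENNReal.ofReal (t ^ (-γ))) t := by
          rw [hh_def]
          simp only []
          rw [Set.indicator_of_mem (Set.mem_Ioc.mpr ⟨ht, h1⟩)]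
        rw [this]
        exact le_trans prob_le_one le_self_add
      · push_neg at h1
        by_cases h2 : t ≤ b
        · have hss : {ω | t < min (X i ω) b} ⊆ {ω | t < X i ω} := by
            intro ω hω
            rw [Set.mem_setOf_eq] at hω ⊢
            exact lt_of_lt_of_le hω (min_le_left _ _)
          have hsub : μ {ω | t < min (X i ω) b} ≤ μ {ω | t < X i ω} := measure_mono hss
          rw [htail i t h1.le] at hsub
          refine le_trans hsub ?_
          rw [hh_def]
          simp only []
          rw [Set.indicator_of_mem (Set.mem_Ioc.mpr ⟨h1, h2⟩)]
          exact le_add_self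
        · push_neg at h2
          have hempty : {ω | t < min (X i ω) b} = ∅ :=
            Set.eq_empty_iff_forall_notMem.mpr fun ω hω =>
              absurd (lt_of_lt_of_le hω (min_le_right _ _)) (not_lt.mpr h2.le)
          rw [hempty, measure_empty]
          exact zero_le
    have hIoc : IntegrableOn (fun t : ℝ => t ^ (-γ)) (Set.Ioc 1 b) := by
      have : IntervalIntegrable (fun t : ℝ => t ^ (-γ)) MeasureTheory.volume 1 b := by
        apply intervalIntegral.intervalIntegrable_rpow
        right
        rw [Set.uIcc_of_le hb1]
        intro hmem
        rw [Set.mem_Icc] at hmem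
        linarith [hmem.1]
      exact this.1
    calc (∫⁻ t in Set.Ioi 0, μ {ω | t < min (X i ω) b})
        ≤ ∫⁻ t in Set.Ioi 0, h t := setLIntegral_mono hhm hpt
      _ ≤ ∫⁻ t, h t := setLIntegral_le_lintegral _ _
      _ = (∫⁻ t, (Set.Ioc (0:ℝ) 1).indicator (fun _ => (1:ℝ≥0∞)) t)
          + ∫⁻ t, (Set.Ioc (1:ℝ) b).indicator (fun t => ENNReal.ofReal (t ^ (-γ))) t := by
          rw [hh_def]
          exact lintegral_add_left hhm1 _
      _ = 1 + ∫⁻ t in Set.Ioc (1:ℝ) b, ENNReal.ofReal (t ^ (-γ)) := by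
          rw [lintegral_indicator measurableSet_Ioc,
            lintegral_indicator measurableSet_Ioc, setLIntegral_const,
            Real.volume_Ioc]
          norm_num
      _ = 1 + ENNReal.ofReal (∫ t in Set.Ioc (1:ℝ) b, t ^ (-γ)) := by
          rw [← ofReal_integral_eq_lintegral_ofReal hIoc]
          exact (ae_restrict_iff' measurableSet_Ioc).mpr (ae_of_all _ fun t ht =>
            Real.rpow_nonneg (by linarith [ht.1]) _)
      _ ≤ ENNReal.ofReal (1 + b^(1-γ)/(1-γ)) := by
          have hreal : (∫ t in Set.Ioc (1:ℝ) b, t ^ (-γ)) ≤ b^(1-γ)/(1-γ) := by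
            rw [← intervalIntegral.integral_of_le hb1,
              integral_rpow (Or.inl (by linarith : (-1:ℝ) < -γ)), Real.one_rpow]
            have hexp : -γ + 1 = 1 - γ := by ring
            rw [hexp]
            exact (div_le_div_iff_of_pos_right hγ1').mpr (by linarith)
          calc (1:ℝ≥0∞) + ENNReal.ofReal (∫ t in Set.Ioc (1:ℝ) b, t ^ (-γ))
              ≤ 1 + ENNReal.ofReal (b^(1-γ)/(1-γ)) := by
                gcongr
            _ = ENNReal.ofReal (1 + b^(1-γ)/(1-γ)) := by
                rw [ENNReal.ofReal_add (by norm_num)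
                  (div_nonneg (Real.rpow_nonneg hb0.le _) hγ1'.le), ENNReal.ofReal_one]
  have hTmeas : Measurable T := by
    apply Finset.measurable_sum
    intro i _
    exact (hmeas i).min measurable_const
  have hE3 : μ E3 ≤ ENNReal.ofReal (ε/3) := by
    have hmark := markov_aux μ T hTmeas (K/2*a) (by positivity)
    have hint : (∫⁻ ω, ENNReal.ofReal (T ω) ∂μ) ≤ ENNReal.ofReal (b*C) := by
      calc (∫⁻ ω, ENNReal.ofReal (T ω) ∂μ)
          ≤ ∫⁻ ω, ∑ i ∈ Finset.range m, ENNReal.ofReal (min (X i ω) b) ∂μ :=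
            lintegral_mono fun ω => ofReal_sum_le _ _
        _ = ∑ i ∈ Finset.range m, ∫⁻ ω, ENNReal.ofReal (min (X i ω) b) ∂μ :=
            lintegral_finset_sum _ (fun i _ =>
              ENNReal.measurable_ofReal.comp ((hmeas i).min measurable_const))
        _ ≤ ∑ _i ∈ Finset.range m, ENNReal.ofReal (1 + b^(1-γ)/(1-γ)) :=
            Finset.sum_le_sum (fun i _ => hTi i)
        _ = (m:ℝ≥0∞) * ENNReal.ofReal (1 + b^(1-γ)/(1-γ)) := by
            rw [Finset.sum_const, Finset.card_range, nsmul_eq_mul]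
        _ = ENNReal.ofReal ((m:ℝ) * (1 + b^(1-γ)/(1-γ))) := by
            rw [← ENNReal.ofReal_natCast m, ← ENNReal.ofReal_mul (by positivity)]
        _ ≤ ENNReal.ofReal (b*C) := by
            apply ENNReal.ofReal_le_ofReal
            have hexpand : (m:ℝ) * (1 + b^(1-γ)/(1-γ)) = m + ((m:ℝ) * b^(1-γ))/(1-γ) := by
              ring
            rw [hexpand, hbb, hC_def]
            have h2 : b * (1 + 1/(1-γ)) = b + b/(1-γ) := by ring
            rw [h2]
            linarith
    calc μ E3 ≤ (∫⁻ ω, ENNReal.ofReal (T ω) ∂μ) / ENNReal.ofReal (K/2*a) := hmark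
      _ ≤ ENNReal.ofReal (b*C) / ENNReal.ofReal (K/2*a) := by gcongr
      _ = ENNReal.ofReal (b*C/(K/2*a)) := (ENNReal.ofReal_div_of_pos (by positivity)).symm
      _ ≤ ENNReal.ofReal (ε/3) := by
          apply ENNReal.ofReal_le_ofReal
          have h1 : b*C/(K/2*a) ≤ 2*cg*C/K :=
            div_bound_aux b C K a cg hC0 hK0 ha0 hab
          linarith
  -- combine
  calc μ {ω | K < (∑ i ∈ Finset.range m, X i ω) / firstMax m fun i => X i ω}
      ≤ μ ((E1 ∪ E2 ∪ E3) ∪ Gᶜ) := measure_mono hincl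
    _ ≤ μ (E1 ∪ E2 ∪ E3) + μ Gᶜ := measure_union_le _ _
    _ = μ (E1 ∪ E2 ∪ E3) := by rw [hGc, add_zero]
    _ ≤ μ (E1 ∪ E2) + μ E3 := measure_union_le _ _
    _ ≤ μ E1 + μ E2 + μ E3 := by gcongr; exact measure_union_le _ _
    _ ≤ ENNReal.ofReal (ε/3) + ENNReal.ofReal (ε/3) + ENNReal.ofReal (ε/3) := by gcongr
    _ = ENNReal.ofReal ε := by
        rw [← ENNReal.ofReal_add (by positivity) (by positivity),
          ← ENNReal.ofReal_add (by positivity) (by positivity)]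
        congr 1
        ring
end

section
/- Let X_1, X_2, ... be iid Pareto random variables with tail index γ ∈ (0,1), S_m their partial sum and M_m^{(2)} the second largest among X_1,...,X_m. Then the family of ratios {S_m / M_m^{(2)}}_{m≥2} is tight. -/
open MeasureTheory ProbabilityTheory Set
open scoped ENNReal

/-- choice of the exponential constant -/
lemma exp_bound_aux {ε : ℝ} (hε : 0 < ε) : ∃ c : ℝ, 8 ≤ c ∧ (1 + c) * Real.exp (-(c/2)) ≤ ε := by
  refine ⟨max 8 (96/ε), le_max_left _ _, ?_⟩
  set c := max 8 (96/ε) with hc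
  have hc8 : (8:ℝ) ≤ c := le_max_left _ _
  have hcε : 96/ε ≤ c := le_max_right _ _
  have h96 : 96 ≤ c * ε := by
    rw [div_le_iff₀ hε] at hcε; linarith
  have h1 : (c/4)^2 ≤ Real.exp (c/2) := by
    have h2 := Real.add_one_le_exp (c/4)
    have h3 : Real.exp (c/2) = Real.exp (c/4) * Real.exp (c/4) := by
      rw [← Real.exp_add]; ring_nf
    nlinarith [Real.exp_pos (c/4)]
  rw [Real.exp_neg, mul_inv_le_iff₀ (Real.exp_pos _)]
  nlinarith [Real.exp_pos (c/2)]

/-- truncated expectation bound for Pareto tail -/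
lemma truncExp_bound {Ω : Type*} [MeasurableSpace Ω] (μ : Measure Ω)
    [IsProbabilityMeasure μ] {γ : ℝ} (hγ0 : 0 < γ) (hγ1 : γ < 1)
    {X : Ω → ℝ} (hX : Measurable X)
    (htail : ∀ s : ℝ, 1 ≤ s → μ {ω | s < X ω} = ENNReal.ofReal (s ^ (-γ)))
    {t : ℝ} (ht : 1 ≤ t) :
    ∫⁻ ω, ENNReal.ofReal (max (min (X ω) t) 0) ∂μ
      ≤ ENNReal.ofReal (t ^ (1-γ) / (1-γ)) := by
  have ht0 : (0:ℝ) < t := lt_of_lt_of_le one_pos ht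
  have hYm : Measurable fun ω => max (min (X ω) t) 0 :=
    (hX.min measurable_const).max measurable_const
  have key := lintegral_eq_lintegral_meas_lt μ (f := fun ω => max (min (X ω) t) 0)
    (Filter.Eventually.of_forall fun ω => le_max_right _ _) hYm.aemeasurable
  rw [key]
  have step1 : ∫⁻ u in Ioi (0:ℝ), μ {a | u < max (min (X a) t) 0}
      ≤ ∫⁻ u in Ioi (0:ℝ), (Ioo (0:ℝ) t).indicator (fun u => ENNReal.ofReal (u ^ (-γ))) u := by
    refine lintegral_mono_ae ?_
    filter_upwards [ae_restrict_mem measurableSet_Ioi] with u hu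
    simp only [mem_Ioi] at hu
    by_cases hut : u < t
    · rw [indicator_of_mem (by exact ⟨hu, hut⟩ : u ∈ Ioo (0:ℝ) t)]
      have hsub : {a | u < max (min (X a) t) 0} ⊆ {a | u < X a} := by
        intro a ha
        simp only [mem_setOf_eq, lt_max_iff, lt_min_iff] at ha ⊢
        rcases ha with ⟨h1, _⟩ | h2
        · exact h1
        · linarith
      refine le_trans (measure_mono hsub) ?_
      by_cases hu1 : 1 ≤ u
      · exact le_of_eq (htail u hu1)
      · push_neg at hu1
        calc μ {a | u < X a} ≤ 1 := prob_le_one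
        _ = ENNReal.ofReal 1 := by simp
        _ ≤ ENNReal.ofReal (u ^ (-γ)) := ENNReal.ofReal_le_ofReal
            (Real.one_le_rpow_of_pos_of_le_one_of_nonpos hu hu1.le (by linarith))
    · rw [indicator_of_notMem (by simp [mem_Ioo, hut] : u ∉ Ioo (0:ℝ) t)]
      have : {a | u < max (min (X a) t) 0} = ∅ := by
        ext a
        simp only [mem_setOf_eq, mem_empty_iff_false, iff_false, not_lt, max_le_iff]
        push_neg at hut
        exact ⟨le_trans (min_le_right _ _) hut, by linarith⟩
      rw [this]; simp
  refine le_trans step1 ?_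
  rw [lintegral_indicator measurableSet_Ioo _, Measure.restrict_restrict measurableSet_Ioo,
    inter_eq_left.mpr (fun u hu => hu.1)]
  have hint : IntegrableOn (fun u : ℝ => u ^ (-γ)) (Ioo 0 t) := by
    have h := intervalIntegral.intervalIntegrable_rpow' (a := 0) (b := t) (r := -γ) (by linarith)
    rw [intervalIntegrable_iff] at h
    exact h.mono_set (by rw [uIoc_of_le ht0.le]; exact Ioo_subset_Ioc_self)
  rw [← ofReal_integral_eq_lintegral_ofReal hint ?_]
  · apply ENNReal.ofReal_le_ofReal
    rw [← MeasureTheory.integral_Ioc_eq_integral_Ioo, ← intervalIntegral.integral_of_le ht0.le,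
      integral_rpow (Or.inl (by linarith))]
    rw [Real.zero_rpow (by linarith : -γ + 1 ≠ 0)]
    rw [show -γ + 1 = 1 - γ by ring]
    simp
  · filter_upwards [ae_restrict_mem measurableSet_Ioo] with u hu
    exact Real.rpow_nonneg hu.1.le _

noncomputable def secondMax (m : ℕ) (f : ℕ → ℝ) : ℝ :=
  if hm : 2 ≤ m then
    (Finset.range m).inf' (Finset.nonempty_range_iff.mpr (by omega)) fun j =>
      ((Finset.range m).erase j).sup'
        (Finset.card_pos.mp (by
          have h1 := Finset.pred_card_le_card_erase (s := Finset.range m) (a := j)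
          simp only [Finset.card_range] at h1
          omega)) f
  else 0

set_option maxHeartbeats 2000000 in
/-- For iid Pareto(γ) random variables with `0 < γ < 1`, the family
`{S_m / M_m^{(2)}}_{m ≥ 2}` of sums divided by the second-largest order statistic is
tight. -/
theorem sum_div_secondMax_tight {Ω : Type*} [MeasurableSpace Ω] (μ : Measure Ω)
    [IsProbabilityMeasure μ] (γ : ℝ) (hγ0 : 0 < γ) (hγ1 : γ < 1)
    (X : ℕ → Ω → ℝ) (hmeas : ∀ i, Measurable (X i))
    (hindep : iIndepFun X μ)
    (htail : ∀ i, ∀ s : ℝ, 1 ≤ s → μ {ω | s < X i ω} = ENNReal.ofReal (s ^ (-γ))) :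
    ∀ ε : ℝ, 0 < ε → ∃ K : ℝ, ∀ m : ℕ, 2 ≤ m →
      μ {ω | K < (∑ i ∈ Finset.range m, X i ω) / secondMax m fun i => X i ω}
        ≤ ENNReal.ofReal ε := by
  intro ε hε
  have hγ0' : γ ≠ 0 := hγ0.ne'
  have h1γ : (0:ℝ) < 1 - γ := by linarith
  obtain ⟨c, hc8, hcε⟩ := exp_bound_aux (show (0:ℝ) < ε/3 by linarith)
  have hc0 : (0:ℝ) < c := by linarith
  set δ : ℝ := c ^ (-γ⁻¹) with hδdef
  have hδ0 : 0 < δ := Real.rpow_pos_of_pos hc0 _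
  have hδc : δ ^ (-γ) = c := by
    rw [hδdef, ← Real.rpow_mul hc0.le]
    rw [show -γ⁻¹ * -γ = 1 by field_simp, Real.rpow_one]
  set η : ℝ := min (ε/3) 1 with hηdef
  have hη0 : 0 < η := lt_min (by linarith) one_pos
  have hη1 : η ≤ 1 := min_le_right _ _
  have hηε : η ≤ ε/3 := min_le_left _ _
  set A : ℝ := η ^ (-((1-γ)/γ)) / (1-γ) with hAdef
  have hA0 : 0 < A := div_pos (Real.rpow_pos_of_pos hη0 _) h1γ
  refine ⟨max 1 (3*A/(ε*δ)), fun m hm => ?_⟩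
  set K : ℝ := max 1 (3*A/(ε*δ)) with hKdef
  have hK1 : (1:ℝ) ≤ K := le_max_left _ _
  have hK0 : (0:ℝ) < K := lt_of_lt_of_le one_pos hK1
  have hKA : A ≤ K * δ * (ε/3) := by
    have h2 : 3*A/(ε*δ) ≤ K := le_max_right _ _
    rw [div_le_iff₀ (mul_pos hε hδ0)] at h2
    nlinarith
  have hm2 : (2:ℝ) ≤ (m:ℝ) := by exact_mod_cast hm
  have hm0 : (0:ℝ) < (m:ℝ) := by linarith
  set s : ℝ := max (δ * (m:ℝ) ^ γ⁻¹) 1 with hsdef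
  have hs1 : 1 ≤ s := le_max_right _ _
  have hs0 : 0 < s := lt_of_lt_of_le one_pos hs1
  have hsδ : δ * (m:ℝ) ^ γ⁻¹ ≤ s := le_max_left _ _
  set t : ℝ := ((m:ℝ)/η) ^ γ⁻¹ with htdef
  have hmη : 1 ≤ (m:ℝ)/η := (one_le_div hη0).mpr (le_trans hη1 (by linarith))
  have ht1 : 1 ≤ t := Real.one_le_rpow hmη (by positivity)
  have ht0 : 0 < t := lt_of_lt_of_le one_pos ht1
  clear_value δ η A K s t
  set Y : ℕ → Ω → ℝ := fun i ω => max (min (X i ω) t) 0 with hYdef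
  -- the three events
  set E1 : Set Ω := {ω | secondMax m (fun i => X i ω) < s} with hE1
  set E2 : Set Ω := ⋃ i ∈ Finset.range m, {ω | t < X i ω} with hE2
  set E3 : Set Ω := {ω | K * s ≤ ∑ i ∈ Finset.range m, Y i ω} with hE3
  have hsub : {ω | K < (∑ i ∈ Finset.range m, X i ω) / secondMax m fun i => X i ω}
      ⊆ E1 ∪ (E2 ∪ E3) := by
    intro ω hω
    simp only [mem_setOf_eq] at hω
    by_cases h2 : secondMax m (fun i => X i ω) < s
    · exact Or.inl h2
    push_neg at h2
    have hM0 : 0 < secondMax m fun i => X i ω := lt_of_lt_of_le hs0 h2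
    have hKS : K * s < ∑ i ∈ Finset.range m, X i ω := by
      have h3 := (lt_div_iff₀ hM0).mp hω
      nlinarith
    by_cases h3 : ∃ i ∈ Finset.range m, t < X i ω
    · obtain ⟨i, hi, hti⟩ := h3
      exact Or.inr (Or.inl (mem_biUnion hi hti))
    · push_neg at h3
      refine Or.inr (Or.inr ?_)
      have hle : ∑ i ∈ Finset.range m, X i ω ≤ ∑ i ∈ Finset.range m, Y i ω := by
        refine Finset.sum_le_sum fun i hi => ?_
        have := h3 i hi
        simp only [hYdef]
        rw [min_eq_left this]
        exact le_max_left _ _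
      exact le_of_lt (lt_of_lt_of_le hKS hle)
  -- bound 1
  have hbound1 : μ E1 ≤ ENNReal.ofReal (ε/3) := by
    set p : ℝ := s ^ (-γ) with hpdef
    have hp0 : 0 ≤ p := Real.rpow_nonneg hs0.le _
    have hp1 : p ≤ 1 := Real.rpow_le_one_of_one_le_of_nonpos hs1 (by linarith)
    have hIic : ∀ i : ℕ, μ (X i ⁻¹' Iic s) = ENNReal.ofReal (1 - p) := by
      intro i
      have hcompl : X i ⁻¹' Iic s = {ω | s < X i ω}ᶜ := by
        ext ω; simp [not_lt]
      rw [hcompl, measure_compl (measurableSet_lt measurable_const (hmeas i))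
        (measure_ne_top μ _), measure_univ, htail i s hs1,
        ← ENNReal.ofReal_one, ← ENNReal.ofReal_sub _ hp0, hpdef]
    have hIoi : ∀ i : ℕ, μ (X i ⁻¹' Ioi s) = ENNReal.ofReal p := by
      intro i
      have : X i ⁻¹' Ioi s = {ω | s < X i ω} := rfl
      rw [this, htail i s hs1, hpdef]
    have hall : μ (⋂ i ∈ Finset.range m, X i ⁻¹' Iic s) = ENNReal.ofReal ((1-p)^m) := by
      rw [hindep.measure_inter_preimage_eq_mul (Finset.range m) (sets := fun _ => Iic s)
        (fun i _ => measurableSet_Iic)]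
      have : ∀ i ∈ Finset.range m, μ (X i ⁻¹' Iic s) = ENNReal.ofReal (1-p) :=
        fun i _ => hIic i
      rw [Finset.prod_congr rfl this, Finset.prod_const, Finset.card_range,
        ← ENNReal.ofReal_pow (by linarith)]
    have hone : ∀ j ∈ Finset.range m,
        μ (⋂ i ∈ Finset.range m, X i ⁻¹' (if i = j then Ioi s else Iic s))
          = ENNReal.ofReal (p * (1-p)^(m-1)) := by
      intro j hj
      rw [hindep.measure_inter_preimage_eq_mul (Finset.range m)
        (sets := fun i => if i = j then Ioi s else Iic s)
        (fun i _ => by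
          show MeasurableSet (if i = j then Ioi s else Iic s)
          rcases eq_or_ne i j with h | h
          · rw [if_pos h]; exact measurableSet_Ioi
          · rw [if_neg h]; exact measurableSet_Iic)]
      rw [← Finset.mul_prod_erase _ _ hj, if_pos rfl, hIoi j]
      have heq : ∀ i ∈ (Finset.range m).erase j,
          μ (X i ⁻¹' (if i = j then Ioi s else Iic s)) = ENNReal.ofReal (1-p) := by
        intro i hi
        rw [if_neg (Finset.ne_of_mem_erase hi), hIic]
      rw [Finset.prod_congr rfl heq, Finset.prod_const, Finset.card_erase_of_mem hj,
        Finset.card_range, ← ENNReal.ofReal_pow (by linarith), ← ENNReal.ofReal_mul hp0]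
    have hsub1 : E1 ⊆ (⋂ i ∈ Finset.range m, X i ⁻¹' Iic s) ∪
        ⋃ j ∈ Finset.range m, ⋂ i ∈ Finset.range m,
          X i ⁻¹' (if i = j then Ioi s else Iic s) := by
      intro ω hω
      have hω' : secondMax m (fun i => X i ω) < s := hω
      rw [secondMax, dif_pos hm, Finset.inf'_lt_iff] at hω'
      obtain ⟨j, hj, hlt⟩ := hω'
      rw [Finset.sup'_lt_iff] at hlt
      by_cases hXj : s < X j ω
      · refine Or.inr (mem_biUnion hj ?_)
        simp only [mem_iInter, mem_preimage]
        intro i hi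
        by_cases hij : i = j
        · subst hij; rw [if_pos rfl]; exact hXj
        · rw [if_neg hij]
          exact le_of_lt (hlt i (Finset.mem_erase.mpr ⟨hij, hi⟩))
      · push_neg at hXj
        refine Or.inl ?_
        simp only [mem_iInter, mem_preimage, mem_Iic]
        intro i hi
        by_cases hij : i = j
        · subst hij; exact hXj
        · exact le_of_lt (hlt i (Finset.mem_erase.mpr ⟨hij, hi⟩))
    have hrealb : (1-p)^m + (m:ℝ) * (p * (1-p)^(m-1)) ≤ ε/3 := by
      rcases le_or_gt (δ * (m:ℝ)^γ⁻¹) 1 with hcase | hcase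
      · have hs_eq : s = 1 := by rw [hsdef]; exact max_eq_right hcase
        have hp_eq : p = 1 := by rw [hpdef, hs_eq, Real.one_rpow]
        rw [hp_eq, sub_self, zero_pow (by omega : m ≠ 0), zero_pow (by omega : m - 1 ≠ 0)]
        simp only [mul_zero, add_zero, zero_add]
        linarith
      · have hs_eq : s = δ * (m:ℝ)^γ⁻¹ := by rw [hsdef]; exact max_eq_left hcase.le
        have hp_eq : p = c / m := by
          rw [hpdef, hs_eq, Real.mul_rpow hδ0.le (by positivity), hδc,
            ← Real.rpow_mul hm0.le, show γ⁻¹ * -γ = -1 by field_simp, Real.rpow_neg_one,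
            div_eq_mul_inv]
        have hpm : p * m = c := by rw [hp_eq]; field_simp
        have h1p : 0 ≤ 1 - p := by linarith
        have hexp : (1-p)^(m-1) ≤ Real.exp (-(c/2)) := by
          have e1 : 1 - p ≤ Real.exp (-p) := by
            have := Real.add_one_le_exp (-p); linarith
          have hcast : ((m-1 : ℕ):ℝ) = (m:ℝ) - 1 := by
            push_cast [Nat.cast_sub (by omega : 1 ≤ m)]; ring
          calc (1-p)^(m-1) ≤ Real.exp (-p) ^ (m-1) := pow_le_pow_left₀ h1p e1 _
            _ = Real.exp (((m-1:ℕ):ℝ) * (-p)) := (Real.exp_nat_mul _ _).symm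
            _ ≤ Real.exp (-(c/2)) := by
                apply Real.exp_le_exp.mpr
                rw [hcast]
                have hx0 : 0 ≤ c/(m:ℝ) := by positivity
                have hxm : (c/(m:ℝ)) * m = c := div_mul_cancel₀ _ hm0.ne'
                rw [hp_eq]
                nlinarith [mul_nonneg hx0 (by linarith : (0:ℝ) ≤ (m:ℝ) - 2)]
        have hfinal : (1-p)^m + (m:ℝ)*(p*(1-p)^(m-1)) ≤ (1+c) * Real.exp (-(c/2)) := by
          have hpow_m : (1-p)^m = (1-p)^(m-1) * (1-p) := by
            conv_lhs => rw [show m = (m-1)+1 by omega]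
            rw [pow_succ]
          have hnn : 0 ≤ (1-p)^(m-1) := pow_nonneg h1p _
          have hrw : (1-p)^(m-1)*(1-p) + (m:ℝ)*(p*(1-p)^(m-1))
              = (1-p)^(m-1) * (1 - p + m*p) := by ring
          rw [hpow_m, hrw]
          have h2 : 1 - p + (m:ℝ)*p ≤ 1 + c := by
            have : (m:ℝ)*p = c := by rw [mul_comm]; exact hpm
            linarith
          have h3 : 0 ≤ 1 - p + (m:ℝ)*p := by
            have : 0 ≤ (m:ℝ)*p := by positivity
            linarith
          calc (1-p)^(m-1) * (1 - p + (m:ℝ)*p) ≤ Real.exp (-(c/2)) * (1+c) :=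
              mul_le_mul hexp h2 h3 (Real.exp_pos _).le
            _ = (1+c) * Real.exp (-(c/2)) := mul_comm _ _
        linarith
    calc μ E1 ≤ μ (⋂ i ∈ Finset.range m, X i ⁻¹' Iic s)
          + μ (⋃ j ∈ Finset.range m, ⋂ i ∈ Finset.range m,
              X i ⁻¹' (if i = j then Ioi s else Iic s)) :=
        le_trans (measure_mono hsub1) (measure_union_le _ _)
      _ ≤ ENNReal.ofReal ((1-p)^m)
          + ∑ j ∈ Finset.range m, ENNReal.ofReal (p * (1-p)^(m-1)) := by
          rw [hall]
          gcongr
          refine le_trans (measure_biUnion_finset_le _ _) ?_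
          exact le_of_eq (Finset.sum_congr rfl hone)
      _ = ENNReal.ofReal ((1-p)^m + (m:ℝ) * (p * (1-p)^(m-1))) := by
          rw [Finset.sum_const, Finset.card_range, nsmul_eq_mul,
            ← ENNReal.ofReal_natCast m, ← ENNReal.ofReal_mul (by positivity : (0:ℝ) ≤ (m:ℝ)),
            ← ENNReal.ofReal_add (pow_nonneg (by linarith) _)
              (mul_nonneg (by positivity) (mul_nonneg hp0 (pow_nonneg (by linarith) _)))]
      _ ≤ ENNReal.ofReal (ε/3) := ENNReal.ofReal_le_ofReal hrealb
  -- bound 2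
  have hbound2 : μ E2 ≤ ENNReal.ofReal (ε/3) := by
    have htγ : t ^ (-γ) = η / m := by
      rw [htdef, ← Real.rpow_mul (div_nonneg hm0.le hη0.le), show γ⁻¹ * -γ = -1 by field_simp,
        Real.rpow_neg_one, inv_div]
    calc μ E2 ≤ ∑ i ∈ Finset.range m, μ {ω | t < X i ω} := measure_biUnion_finset_le _ _
      _ = ∑ _i ∈ Finset.range m, ENNReal.ofReal (η / m) := by
          refine Finset.sum_congr rfl fun i _ => ?_
          rw [htail i t ht1, htγ]
      _ = (m : ℝ≥0∞) * ENNReal.ofReal (η / m) := by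
          rw [Finset.sum_const, Finset.card_range, nsmul_eq_mul]
      _ = ENNReal.ofReal ((m:ℝ) * (η / m)) := by
          rw [ENNReal.ofReal_mul (by positivity), ENNReal.ofReal_natCast]
      _ ≤ ENNReal.ofReal (ε/3) := by
          rw [mul_div_cancel₀ _ hm0.ne']
          exact ENNReal.ofReal_le_ofReal hηε
  -- bound 3
  have hbound3 : μ E3 ≤ ENNReal.ofReal (ε/3) := by
    have hYmeas : ∀ i, Measurable (Y i) := fun i =>
      ((hmeas i).min measurable_const).max measurable_const
    have hYnn : ∀ i ω, 0 ≤ Y i ω := fun i ω => le_max_right _ _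
    set f : Ω → ℝ≥0∞ := fun ω => ENNReal.ofReal (∑ i ∈ Finset.range m, Y i ω) with hfdef
    have hfmeas : Measurable f := (Finset.measurable_sum _ fun i _ => hYmeas i).ennreal_ofReal
    have hmark := mul_meas_ge_le_lintegral₀ (μ := μ) hfmeas.aemeasurable (ENNReal.ofReal (K*s))
    have hlint : ∫⁻ ω, f ω ∂μ ≤ ENNReal.ofReal ((m:ℝ) * (t ^ (1-γ) / (1-γ))) := by
      have hfs : ∀ ω, f ω = ∑ i ∈ Finset.range m, ENNReal.ofReal (Y i ω) := fun ω =>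
        ENNReal.ofReal_sum_of_nonneg fun i _ => hYnn i ω
      calc ∫⁻ ω, f ω ∂μ = ∑ i ∈ Finset.range m, ∫⁻ ω, ENNReal.ofReal (Y i ω) ∂μ := by
            simp_rw [hfs]; exact lintegral_finset_sum _ fun i _ => (hYmeas i).ennreal_ofReal
        _ ≤ ∑ _i ∈ Finset.range m, ENNReal.ofReal (t ^ (1-γ) / (1-γ)) :=
            Finset.sum_le_sum fun i _ => truncExp_bound μ hγ0 hγ1 (hmeas i) (htail i) ht1
        _ = ENNReal.ofReal ((m:ℝ) * (t ^ (1-γ) / (1-γ))) := by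
            rw [Finset.sum_const, Finset.card_range, nsmul_eq_mul,
              ← ENNReal.ofReal_natCast m, ← ENNReal.ofReal_mul (by positivity : (0:ℝ) ≤ (m:ℝ))]
    have hEsub : E3 ⊆ {ω | ENNReal.ofReal (K*s) ≤ f ω} := fun ω hω =>
      ENNReal.ofReal_le_ofReal hω
    have hreal : (m:ℝ) * (t ^ (1-γ) / (1-γ)) ≤ (K * s) * (ε/3) := by
      set β : ℝ := (1-γ)/γ with hβ
      have hb1 : γ⁻¹ * (1-γ) = β := by rw [hβ]; field_simp
      have hb2 : (m:ℝ) ^ γ⁻¹ = (m:ℝ) * (m:ℝ) ^ β := by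
        rw [show γ⁻¹ = 1 + β by rw [hβ]; field_simp; ring, Real.rpow_add hm0, Real.rpow_one]
      have ht1γ : t ^ (1-γ) = (m:ℝ) ^ β * η ^ (-β) := by
        rw [htdef, ← Real.rpow_mul (div_nonneg hm0.le hη0.le), hb1, Real.div_rpow hm0.le hη0.le,
          Real.rpow_neg hη0.le, div_eq_mul_inv]
      have hKδA : η ^ (-β) / (1-γ) ≤ K * δ * (ε/3) := by
        rw [hβ, ← hAdef]; exact hKA
      have hst : K * (δ * (m:ℝ)^γ⁻¹) * (ε/3) ≤ K * s * (ε/3) := by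
        have h1 : 0 ≤ (m:ℝ)^γ⁻¹ := by positivity
        nlinarith [hsδ, hK0, hε]
      refine le_trans ?_ hst
      rw [ht1γ, hb2]
      have hmm : 0 ≤ (m:ℝ) * (m:ℝ)^β := by positivity
      calc (m:ℝ) * ((m:ℝ)^β * η^(-β) / (1-γ)) = ((m:ℝ) * (m:ℝ)^β) * (η^(-β)/(1-γ)) := by
            ring
        _ ≤ ((m:ℝ) * (m:ℝ)^β) * (K * δ * (ε/3)) := mul_le_mul_of_nonneg_left hKδA hmm
        _ = K * (δ * ((m:ℝ) * (m:ℝ)^β)) * (ε/3) := by ring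
    have hmain : ENNReal.ofReal (K*s) * μ E3 ≤ ENNReal.ofReal (K*s) * ENNReal.ofReal (ε/3) := by
      calc ENNReal.ofReal (K*s) * μ E3
          ≤ ENNReal.ofReal (K*s) * μ {ω | ENNReal.ofReal (K*s) ≤ f ω} := by
            gcongr <;> exact measure_mono hEsub
        _ ≤ ∫⁻ ω, f ω ∂μ := hmark
        _ ≤ ENNReal.ofReal ((m:ℝ) * (t ^ (1-γ) / (1-γ))) := hlint
        _ ≤ ENNReal.ofReal ((K * s) * (ε/3)) := ENNReal.ofReal_le_ofReal hreal
        _ = ENNReal.ofReal (K*s) * ENNReal.ofReal (ε/3) :=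
            ENNReal.ofReal_mul (mul_pos hK0 hs0).le
    exact (ENNReal.mul_le_mul_iff_right (ENNReal.ofReal_pos.mpr (mul_pos hK0 hs0)).ne'
      ENNReal.ofReal_ne_top).mp hmain
  calc μ {ω | K < (∑ i ∈ Finset.range m, X i ω) / secondMax m fun i => X i ω}
      ≤ μ (E1 ∪ (E2 ∪ E3)) := measure_mono hsub
    _ ≤ μ E1 + μ (E2 ∪ E3) := measure_union_le _ _
    _ ≤ μ E1 + (μ E2 + μ E3) := by gcongr; exact measure_union_le _ _
    _ ≤ ENNReal.ofReal (ε/3) + (ENNReal.ofReal (ε/3) + ENNReal.ofReal (ε/3)) := by gcongr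
    _ = ENNReal.ofReal ε := by
        rw [← ENNReal.ofReal_add (by linarith) (by linarith), ← ENNReal.ofReal_add (by linarith) (by linarith)]
        congr 1; ring
end

section
/- Let X_1, ..., X_m be iid Pareto(γ) random variables with γ ∈ (0,1). For every ε ∈ (0,1) there is δ > 0, independent of m, such that P(max_{i≤m} X_i ≥ ε ∑_{i≤m} X_i) ≥ δ for all m ≥ 1. -/
open MeasureTheory ProbabilityTheory Set
open scoped ENNReal

lemma trunc_lintegral_le {Ω : Type*} [MeasurableSpace Ω] (μ : Measure Ω) [IsProbabilityMeasure μ]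
    (γ b : ℝ) (hγ0 : 0 < γ) (hγ1 : γ < 1) (hb : 1 ≤ b)
    (Z : Ω → ℝ) (hZ : Measurable Z)
    (htail : ∀ s : ℝ, 1 ≤ s → μ {ω | s < Z ω} = ENNReal.ofReal (s ^ (-γ))) :
    ∫⁻ ω, ENNReal.ofReal (min b (max 1 (Z ω))) ∂μ ≤ ENNReal.ofReal (b ^ (1-γ) / (1-γ)) := by
  have hb0 : (0:ℝ) < b := lt_of_lt_of_le one_pos hb
  have hγ1' : (0:ℝ) < 1 - γ := by linarith
  set Y : Ω → ℝ := fun ω => min b (max 1 (Z ω)) with hYdef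
  have hYm : Measurable Y := measurable_const.min (measurable_const.max hZ)
  have hY0 : ∀ ω, 0 ≤ Y ω := fun ω => le_min hb0.le (le_trans zero_le_one (le_max_left _ _))
  rw [lintegral_eq_lintegral_meas_lt μ (Filter.Eventually.of_forall hY0) hYm.aemeasurable]
  have hmono : ∀ t ∈ Ioi (0:ℝ), μ {a | t < Y a} ≤
      (Ioc (0:ℝ) b).indicator (fun t => ENNReal.ofReal (t ^ (-γ))) t := by
    intro t ht
    by_cases htb : t ≤ b
    · rw [Set.indicator_of_mem (Set.mem_Ioc.mpr ⟨ht, htb⟩)]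
      by_cases ht1 : t ≤ 1
      · refine le_trans prob_le_one ?_
        rw [← ENNReal.ofReal_one]
        exact ENNReal.ofReal_le_ofReal
          (Real.one_le_rpow_of_pos_of_le_one_of_nonpos ht ht1 (by linarith))
      · push_neg at ht1
        have hsub : {a | t < Y a} ⊆ {a | t < Z a} := by
          intro a ha
          have h1 : t < max 1 (Z a) := lt_of_lt_of_le ha (min_le_right _ _)
          rcases lt_max_iff.mp h1 with h | h
          · linarith
          · exact h
        calc μ {a | t < Y a} ≤ μ {a | t < Z a} := measure_mono hsub
          _ = ENNReal.ofReal (t ^ (-γ)) := htail t ht1.le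
    · have hempty : {a | t < Y a} = ∅ := by
        ext a
        simp only [Set.mem_setOf_eq, Set.mem_empty_iff_false, iff_false, not_lt]
        exact le_trans (min_le_left _ _) (le_of_not_ge htb)
      rw [hempty, measure_empty]
      exact zero_le
  calc ∫⁻ t in Ioi (0:ℝ), μ {a | t < Y a}
      ≤ ∫⁻ t in Ioi (0:ℝ), (Ioc (0:ℝ) b).indicator (fun t => ENNReal.ofReal (t ^ (-γ))) t :=
        setLIntegral_mono
          ((by fun_prop : Measurable fun t:ℝ => ENNReal.ofReal (t ^ (-γ))).indicator
            measurableSet_Ioc) hmono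
    _ = ∫⁻ t in Ioc (0:ℝ) b, ENNReal.ofReal (t ^ (-γ)) := by
        rw [lintegral_indicator measurableSet_Ioc _, Measure.restrict_restrict measurableSet_Ioc,
          Set.inter_eq_self_of_subset_left Set.Ioc_subset_Ioi_self]
    _ = ENNReal.ofReal (∫ t in Set.Ioc (0:ℝ) b, t ^ (-γ)) := by
        rw [← ofReal_integral_eq_lintegral_ofReal]
        · exact (intervalIntegrable_iff_integrableOn_Ioc_of_le hb0.le).mp
            (intervalIntegral.intervalIntegrable_rpow' (by linarith))
        · filter_upwards [ae_restrict_mem measurableSet_Ioc] with t ht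
          exact Real.rpow_nonneg ht.1.le _
    _ ≤ ENNReal.ofReal (b ^ (1-γ) / (1-γ)) := by
        apply ENNReal.ofReal_le_ofReal
        rw [← intervalIntegral.integral_of_le hb0.le,
          integral_rpow (Or.inl (by linarith : (-1:ℝ) < -γ)),
          Real.zero_rpow (by linarith : -γ + 1 ≠ 0), sub_zero,
          (by ring : -γ + 1 = 1 - γ)]

lemma sum_tail_le {Ω : Type*} [MeasurableSpace Ω] (μ : Measure Ω) [IsProbabilityMeasure μ]
    (γ : ℝ) (hγ0 : 0 < γ) (hγ1 : γ < 1)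
    (X : ℕ → Ω → ℝ) (hmeas : ∀ i, Measurable (X i))
    (htail : ∀ i, ∀ s : ℝ, 1 ≤ s → μ {ω | s < X i ω} = ENNReal.ofReal (s ^ (-γ)))
    (s : Finset ℕ) (b : ℝ) (hb : 1 ≤ b) :
    μ {ω | b < ∑ j ∈ s, X j ω} ≤ ENNReal.ofReal (2 * s.card * b ^ (-γ) / (1-γ)) := by
  have hb0 : (0:ℝ) < b := lt_of_lt_of_le one_pos hb
  have hγ1' : (0:ℝ) < 1 - γ := by linarith
  have hbγ : (0:ℝ) < b ^ (-γ) := Real.rpow_pos_of_pos hb0 _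
  set Y : ℕ → Ω → ℝ := fun j ω => min b (max 1 (X j ω)) with hYdef
  have hYm : ∀ j, Measurable (Y j) := fun j => measurable_const.min (measurable_const.max (hmeas j))
  have hY0 : ∀ j ω, 0 ≤ Y j ω := fun j ω => le_min hb0.le (le_trans zero_le_one (le_max_left _ _))
  have hsub : {ω | b < ∑ j ∈ s, X j ω} ⊆
      (⋃ j ∈ s, {ω | b < X j ω}) ∪ {ω | b ≤ ∑ j ∈ s, Y j ω} := by
    intro ω hω
    by_cases hall : ∀ j ∈ s, X j ω ≤ b
    · right
      have hXY : ∑ j ∈ s, X j ω ≤ ∑ j ∈ s, Y j ω :=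
        Finset.sum_le_sum fun j hj => le_min (hall j hj) (le_max_right _ _)
      exact le_trans (le_of_lt hω) hXY
    · left
      push_neg at hall
      obtain ⟨j, hj, hbj⟩ := hall
      exact Set.mem_biUnion hj hbj
  have hunion : μ (⋃ j ∈ s, {ω | b < X j ω}) ≤ ENNReal.ofReal (s.card * b ^ (-γ)) := by
    refine le_trans (measure_biUnion_finset_le s _) ?_
    have : ∀ j ∈ s, μ {ω | b < X j ω} = ENNReal.ofReal (b ^ (-γ)) := fun j _ => htail j b hb
    rw [Finset.sum_congr rfl this, Finset.sum_const, nsmul_eq_mul, ← ENNReal.ofReal_natCast s.card,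
      ← ENNReal.ofReal_mul (Nat.cast_nonneg _)]
  have hmarkov : μ {ω | b ≤ ∑ j ∈ s, Y j ω} ≤ ENNReal.ofReal (s.card * b ^ (-γ) / (1-γ)) := by
    have hfm : Measurable fun ω => ∑ j ∈ s, Y j ω :=
      Finset.measurable_sum s fun j _ => hYm j
    have hset : {ω | b ≤ ∑ j ∈ s, Y j ω} =
        {ω | ENNReal.ofReal b ≤ ENNReal.ofReal (∑ j ∈ s, Y j ω)} := by
      ext ω
      simp only [Set.mem_setOf_eq]
      rw [ENNReal.ofReal_le_ofReal_iff (Finset.sum_nonneg fun j hj => hY0 j ω)]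
    have hmk := mul_meas_ge_le_lintegral₀
      (Measurable.aemeasurable (hfm.ennreal_ofReal)) (μ := μ) (ENNReal.ofReal b)
    have hlint : ∫⁻ ω, ENNReal.ofReal (∑ j ∈ s, Y j ω) ∂μ ≤
        ENNReal.ofReal (s.card * (b ^ (1-γ) / (1-γ))) := by
      have heq : ∀ ω, ENNReal.ofReal (∑ j ∈ s, Y j ω) = ∑ j ∈ s, ENNReal.ofReal (Y j ω) :=
        fun ω => ENNReal.ofReal_sum_of_nonneg fun j hj => hY0 j ω
      simp_rw [heq]
      rw [lintegral_finset_sum s fun j _ => (hYm j).ennreal_ofReal]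
      calc ∑ j ∈ s, ∫⁻ ω, ENNReal.ofReal (Y j ω) ∂μ
          ≤ ∑ _j ∈ s, ENNReal.ofReal (b ^ (1-γ) / (1-γ)) :=
            Finset.sum_le_sum fun j _ =>
              trunc_lintegral_le μ γ b hγ0 hγ1 hb (X j) (hmeas j) (htail j)
        _ = ENNReal.ofReal (s.card * (b ^ (1-γ) / (1-γ))) := by
            rw [Finset.sum_const, nsmul_eq_mul, ← ENNReal.ofReal_natCast s.card,
              ← ENNReal.ofReal_mul (Nat.cast_nonneg _)]
    have hkey : ENNReal.ofReal b * μ {ω | b ≤ ∑ j ∈ s, Y j ω} ≤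
        ENNReal.ofReal b * ENNReal.ofReal (s.card * b ^ (-γ) / (1-γ)) := by
      rw [hset]
      refine le_trans hmk (le_trans hlint ?_)
      rw [← ENNReal.ofReal_mul hb0.le]
      apply ENNReal.ofReal_le_ofReal
      have hpow : b ^ ((1:ℝ)-γ) = b * b ^ (-γ) := by
        rw [show (1:ℝ) - γ = 1 + -γ by ring, Real.rpow_add hb0, Real.rpow_one]
      rw [hpow]
      ring_nf
      exact le_refl _
    exact (ENNReal.mul_le_mul_iff_right (by simp [hb0]) ENNReal.ofReal_ne_top).mp hkey
  calc μ {ω | b < ∑ j ∈ s, X j ω}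
      ≤ μ ((⋃ j ∈ s, {ω | b < X j ω}) ∪ {ω | b ≤ ∑ j ∈ s, Y j ω}) := measure_mono hsub
    _ ≤ μ (⋃ j ∈ s, {ω | b < X j ω}) + μ {ω | b ≤ ∑ j ∈ s, Y j ω} := measure_union_le _ _
    _ ≤ ENNReal.ofReal (s.card * b ^ (-γ)) + ENNReal.ofReal (s.card * b ^ (-γ) / (1-γ)) :=
        add_le_add hunion hmarkov
    _ ≤ ENNReal.ofReal (2 * s.card * b ^ (-γ) / (1-γ)) := by
        rw [← ENNReal.ofReal_add (by positivity) (by positivity)]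
        apply ENNReal.ofReal_le_ofReal
        set u : ℝ := (s.card : ℝ) * b ^ (-γ) with hu
        have hu0 : 0 ≤ u := by positivity
        have h1 : u ≤ u / (1-γ) := by
          rw [le_div_iff₀ hγ1']
          nlinarith
        have h2 : 2 * (s.card:ℝ) * b ^ (-γ) / (1-γ) = 2 * (u / (1-γ)) := by
          rw [hu]; ring
        linarith
set_option maxHeartbeats 1000000 in
/-- For iid Pareto(γ) random variables with `0 < γ < 1` and every `ε ∈ (0,1)` there is
`δ > 0`, independent of `m`, such that `P(max_{i≤m} X_i ≥ ε ∑_{i≤m} X_i) ≥ δ` for all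
`m ≥ 1`. -/
theorem max_dominates_sum_uniform {Ω : Type*} [MeasurableSpace Ω] (μ : Measure Ω)
    [IsProbabilityMeasure μ] (γ : ℝ) (hγ0 : 0 < γ) (hγ1 : γ < 1)
    (X : ℕ → Ω → ℝ) (hmeas : ∀ i, Measurable (X i))
    (hindep : iIndepFun X μ)
    (htail : ∀ i, ∀ s : ℝ, 1 ≤ s → μ {ω | s < X i ω} = ENNReal.ofReal (s ^ (-γ))) :
    ∀ ε : ℝ, 0 < ε → ε < 1 → ∃ δ : ℝ, 0 < δ ∧ ∀ m : ℕ, 1 ≤ m →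
      ENNReal.ofReal δ ≤
        μ {ω | ε * ∑ i ∈ Finset.range m, X i ω ≤ firstMax m fun i => X i ω} := by
  classical
  intro ε hε0 hε1
  have hγ1' : (0:ℝ) < 1 - γ := by linarith
  set K : ℝ := ((1 - γ)/4) ^ (-1/γ : ℝ) with hKdef
  have hbase0 : (0:ℝ) < (1-γ)/4 := by linarith
  have hK1 : 1 ≤ K :=
    Real.one_le_rpow_of_pos_of_le_one_of_nonpos hbase0 (by linarith)
      (by apply div_nonpos_of_nonpos_of_nonneg <;> linarith)
  have hK0 : 0 < K := lt_of_lt_of_le one_pos hK1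
  have hKγ : K ^ (-γ) = (1-γ)/4 := by
    rw [hKdef, ← Real.rpow_mul hbase0.le,
      show (-1/γ) * (-γ) = 1 by field_simp, Real.rpow_one]
  set c : ℝ := max 1 (ε/(1-ε)) with hcdef
  have hc1 : 1 ≤ c := le_max_left _ _
  have hc0 : 0 < c := lt_of_lt_of_le one_pos hc1
  have hcK0 : (0:ℝ) < c * K := by positivity
  refine ⟨(c*K)^(-γ)/2, by positivity, ?_⟩
  intro m hm
  have hm0 : (0:ℝ) < m := by exact_mod_cast hm
  have hm1 : (1:ℝ) ≤ m := by exact_mod_cast hm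
  set a : ℝ := (m:ℝ) ^ (1/γ:ℝ) with hadef
  have ha1 : 1 ≤ a := Real.one_le_rpow hm1 (by positivity)
  have ha0 : 0 < a := lt_of_lt_of_le one_pos ha1
  set b : ℝ := K * a with hbdef
  have hb1 : 1 ≤ b := le_trans hK1 (le_mul_of_one_le_right hK0.le ha1)
  have hb0 : (0:ℝ) < b := lt_of_lt_of_le one_pos hb1
  set t : ℝ := c * b with htdef
  have ht1 : 1 ≤ t := le_trans hb1 (le_mul_of_one_le_left hb0.le hc1)
  have haγ : a ^ (-γ) = (m:ℝ)⁻¹ := by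
    rw [hadef, ← Real.rpow_mul hm0.le, show (1/γ) * (-γ) = -1 by field_simp,
      Real.rpow_neg_one]
  have htγ : t ^ (-γ) = (c*K) ^ (-γ) * (m:ℝ)⁻¹ := by
    rw [htdef, hbdef, show c * (K * a) = (c * K) * a by ring,
      Real.mul_rpow hcK0.le ha0.le, haγ]
  -- the full measure set
  set G : Set Ω := {ω | ∀ k ∈ Finset.range m, 1 < X k ω} with hGdef
  have hGmeas : MeasurableSet G := by
    have hGeq : G = ⋂ k ∈ Finset.range m, {ω | 1 < X k ω} := by
      ext ω; simp [hGdef]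
    rw [hGeq]
    exact MeasurableSet.biInter (Finset.range m).countable_toSet
      fun k _ => measurableSet_lt measurable_const (hmeas k)
  have hGc : μ Gᶜ = 0 := by
    have hsub : Gᶜ ⊆ ⋃ k ∈ Finset.range m, {ω | X k ω ≤ 1} := by
      intro ω hω
      simp only [hGdef, Set.mem_compl_iff, Set.mem_setOf_eq, not_forall, not_lt] at hω
      obtain ⟨k, hk, h⟩ := hω
      exact Set.mem_biUnion hk h
    refine measure_mono_null hsub ?_
    refine (measure_biUnion_null_iff (Finset.range m).countable_toSet).mpr fun k _ => ?_
    have h1 : μ {ω | 1 < X k ω} = 1 := by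
      rw [htail k 1 le_rfl, Real.one_rpow, ENNReal.ofReal_one]
    have hcompl : {ω | X k ω ≤ 1} = {ω | 1 < X k ω}ᶜ := by
      ext ω; simp [not_lt]
    rw [hcompl, measure_compl (measurableSet_lt measurable_const (hmeas k))
      (measure_ne_top μ _), h1, measure_univ, tsub_self]
  -- the good events
  set A : ℕ → Set Ω := fun i =>
    {ω | t < X i ω} ∩ {ω | ∑ j ∈ (Finset.range m).erase i, X j ω ≤ b} with hAdef
  have hAmeas : ∀ i, MeasurableSet (A i) := fun i =>
    (measurableSet_lt measurable_const (hmeas i)).inter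
      (measurableSet_le (Finset.measurable_sum _ fun j _ => hmeas j) measurable_const)
  -- inclusion of good events into the target
  have hincl : ∀ i ∈ Finset.range m, A i ∩ G ⊆
      {ω | ε * ∑ i ∈ Finset.range m, X i ω ≤ firstMax m fun i => X i ω} := by
    rintro i hi ω ⟨⟨hti, hTi⟩, hG⟩
    set T : ℝ := ∑ j ∈ (Finset.range m).erase i, X j ω with hTdef
    have hT0 : 0 ≤ T := Finset.sum_nonneg fun j hj =>
      le_of_lt (lt_trans zero_lt_one (hG j (Finset.mem_of_mem_erase hj)))
    have hS : ∑ k ∈ Finset.range m, X k ω = X i ω + T :=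
      (Finset.add_sum_erase _ _ hi).symm
    have hXi : ε * ∑ k ∈ Finset.range m, X k ω ≤ X i ω := by
      have hXi' : c * T < X i ω :=
        lt_of_le_of_lt (mul_le_mul_of_nonneg_left hTi hc0.le) hti
      have hce : ε / (1-ε) ≤ c := le_max_right _ _
      have h1 : ε * T ≤ (1-ε) * (c * T) := by
        have h2 : (ε/(1-ε)) * T ≤ c * T := mul_le_mul_of_nonneg_right hce hT0
        have h3 := mul_le_mul_of_nonneg_left h2 (by linarith : (0:ℝ) ≤ 1-ε)
        calc ε * T = (1-ε) * ((ε/(1-ε)) * T) := by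
              field_simp
              rw [mul_div_assoc, div_self (by linarith : (1:ℝ)-ε ≠ 0),
                mul_one]
          _ ≤ (1-ε) * (c*T) := h3
      have h4 : (1-ε)*(c*T) ≤ (1-ε)*(X i ω) :=
        mul_le_mul_of_nonneg_left hXi'.le (by linarith)
      have h5 : ε * T ≤ (1-ε) * X i ω := le_trans h1 h4
      rw [hS]; linarith
    refine le_trans hXi ?_
    rw [firstMax, dif_pos hm]
    exact Finset.le_sup' (fun k => X k ω) hi
  -- disjointness
  have hdisj : (↑(Finset.range m) : Set ℕ).PairwiseDisjoint fun i => A i ∩ G := by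
    intro i hi j hj hij
    refine Set.disjoint_left.mpr ?_
    rintro ω ⟨⟨hti, hTi⟩, hG⟩ ⟨⟨htj, _⟩, _⟩
    simp only [Set.mem_setOf_eq] at hti hTi htj
    have hjmem : j ∈ (Finset.range m).erase i :=
      Finset.mem_erase.mpr ⟨Ne.symm hij, Finset.mem_coe.mp hj⟩
    have hle : X j ω ≤ ∑ k ∈ (Finset.range m).erase i, X k ω :=
      Finset.single_le_sum (fun k hk =>
        le_of_lt (lt_trans zero_lt_one (hG k (Finset.mem_of_mem_erase hk)))) hjmem
    have hbt : b ≤ t := le_mul_of_one_le_left hb0.le hc1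
    linarith
  -- lower bound on the measure of each good event
  have hmain : ∀ i ∈ Finset.range m, ENNReal.ofReal ((c*K)^(-γ)/(2*m)) ≤ μ (A i ∩ G) := by
    intro i hi
    rw [measure_inter_conull hGc]
    set s := (Finset.range m).erase i with hsdef
    have hindepTa : IndepFun (X i) (∑ j ∈ s, X j) μ :=
      (hindep.indepFun_finsetSum_of_notMem hmeas (Finset.notMem_erase i _)).symm
    have hfactor : μ (A i) = μ {ω | t < X i ω} * μ {ω | ∑ j ∈ s, X j ω ≤ b} := by
      have hpre1 : {ω | t < X i ω} = X i ⁻¹' (Set.Ioi t) := rfl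
      have hpre2 : {ω | ∑ j ∈ s, X j ω ≤ b} = (∑ j ∈ s, X j) ⁻¹' (Set.Iic b) := by
        ext ω; simp [Finset.sum_apply]
      rw [hAdef]
      simp only []
      rw [hpre1, hpre2]
      exact hindepTa.measure_inter_preimage_eq_mul _ _ measurableSet_Ioi measurableSet_Iic
    have htX : μ {ω | t < X i ω} = ENNReal.ofReal (t^(-γ)) := htail i t ht1
    have hcard : (s.card : ℝ) ≤ m := by
      have : s.card ≤ m := le_trans (Finset.card_le_card (Finset.erase_subset _ _))
        (le_of_eq (Finset.card_range m))
      exact_mod_cast this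
    have hbγpos : (0:ℝ) < b ^ (-γ) := Real.rpow_pos_of_pos hb0 _
    have hmb : (m:ℝ) * b ^ (-γ) = (1-γ)/4 := by
      rw [hbdef, Real.mul_rpow hK0.le ha0.le, haγ, hKγ]
      field_simp
    have hTb : ENNReal.ofReal (1/2) ≤ μ {ω | ∑ j ∈ s, X j ω ≤ b} := by
      have htb := sum_tail_le μ γ hγ0 hγ1 X hmeas htail s b hb1
      have hreal : 2 * (s.card:ℝ) * b ^ (-γ) / (1-γ) ≤ 1/2 := by
        have h1' : (s.card:ℝ) * b ^ (-γ) ≤ (m:ℝ) * b ^ (-γ) :=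
          mul_le_mul_of_nonneg_right hcard hbγpos.le
        rw [hmb] at h1'
        rw [div_le_iff₀ hγ1']
        linarith
      have htb2 : μ {ω | b < ∑ j ∈ s, X j ω} ≤ ENNReal.ofReal (1/2) :=
        le_trans htb (ENNReal.ofReal_le_ofReal hreal)
      have hcompl : {ω | ∑ j ∈ s, X j ω ≤ b} = {ω | b < ∑ j ∈ s, X j ω}ᶜ := by
        ext ω; simp [not_lt]
      have hmeasB : MeasurableSet {ω | b < ∑ j ∈ s, X j ω} :=
        measurableSet_lt measurable_const (Finset.measurable_sum _ fun j _ => hmeas j)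
      rw [hcompl, measure_compl hmeasB (measure_ne_top μ _), measure_univ]
      have hhalf : (1:ℝ≥0∞) = ENNReal.ofReal (1/2) + ENNReal.ofReal (1/2) := by
        rw [← ENNReal.ofReal_add (by norm_num) (by norm_num)]
        norm_num
      calc ENNReal.ofReal (1/2)
          ≤ 1 - ENNReal.ofReal (1/2) := by
            rw [hhalf, ENNReal.add_sub_cancel_right ENNReal.ofReal_ne_top]
        _ ≤ 1 - μ {ω | b < ∑ j ∈ s, X j ω} := tsub_le_tsub_left htb2 _
    calc ENNReal.ofReal ((c*K)^(-γ)/(2*m))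
        = ENNReal.ofReal (t^(-γ)) * ENNReal.ofReal (1/2) := by
          rw [← ENNReal.ofReal_mul (by positivity), htγ]
          congr 1
          field_simp
          all_goals ring_nf
          all_goals simp
      _ ≤ μ {ω | t < X i ω} * μ {ω | ∑ j ∈ s, X j ω ≤ b} := by
          rw [htX]; exact mul_le_mul_right hTb _
      _ = μ (A i) := hfactor.symm
  -- conclusion
  calc ENNReal.ofReal ((c*K)^(-γ)/2)
      = ∑ _i ∈ Finset.range m, ENNReal.ofReal ((c*K)^(-γ)/(2*m)) := by
        rw [Finset.sum_const, Finset.card_range, nsmul_eq_mul,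
          ← ENNReal.ofReal_natCast m, ← ENNReal.ofReal_mul (Nat.cast_nonneg _)]
        congr 1
        field_simp
        all_goals ring_nf
        all_goals simp
    _ ≤ ∑ i ∈ Finset.range m, μ (A i ∩ G) := Finset.sum_le_sum hmain
    _ = μ (⋃ i ∈ Finset.range m, A i ∩ G) :=
        (measure_biUnion_finset hdisj fun i _ => (hAmeas i).inter hGmeas).symm
    _ ≤ μ {ω | ε * ∑ i ∈ Finset.range m, X i ω ≤ firstMax m fun i => X i ω} :=
        measure_mono (Set.iUnion₂_subset hincl)
end

section
/- In the superlinear fitness-weighted Pólya urn with d colors, fitnesses F_1,...,F_d > 0, exponent β > 1 and initial weights all 1: the probability that color 1 is chosen at every step is at least ∏_{n≥1} F_1 n^β / (F_1 n^β + ∑_{j≥2} F_j), and if F_1 ≥ ε ∑_j F_j then this is at least ∏_{n≥1}(1 - 1/(1 + ε n^β)) > 0. -/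
open MeasureTheory ProbabilityTheory

lemma aux_summable_log (p : ℕ → ℝ) (c β : ℝ) (hβ : 1 < β)
    (hpos : ∀ n, 0 < p n) (hle : ∀ n, p n ≤ 1)
    (hbd : ∀ n, (p n)⁻¹ - 1 ≤ c / ((n : ℝ) + 1) ^ β) :
    Summable fun n => Real.log (p n) := by
  have h1 : Summable fun n : ℕ => ((n : ℝ) ^ β)⁻¹ := Real.summable_nat_rpow_inv.2 hβ
  have h2 : Summable fun n : ℕ => (((n : ℝ) + 1) ^ β)⁻¹ := by
    have := (summable_nat_add_iff 1).2 h1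
    refine this.congr fun n => ?_
    push_cast
    ring_nf
  have hs : Summable fun n : ℕ => c / ((n : ℝ) + 1) ^ β := by
    simpa [div_eq_mul_inv] using h2.mul_left c
  apply Summable.of_abs
  refine hs.of_nonneg_of_le (fun n => abs_nonneg _) fun n => ?_
  have h1' : Real.log (p n) ≤ 0 := Real.log_nonpos (hpos n).le (hle n)
  rw [abs_of_nonpos h1', ← Real.log_inv]
  exact (Real.log_le_sub_one_of_pos (inv_pos.2 (hpos n))).trans (hbd n)

lemma aux_hasProd (p : ℕ → ℝ) (hpos : ∀ n, 0 < p n)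
    (hs : Summable fun n => Real.log (p n)) :
    HasProd p (Real.exp (∑' n, Real.log (p n))) := by
  have h := hs.hasSum.rexp
  have heq : (Real.exp ∘ fun n => Real.log (p n)) = p := by
    funext n; simp [Function.comp, Real.exp_log (hpos n)]
  rwa [heq] at h

lemma aux_tprod_le_partial (p : ℕ → ℝ) (hpos : ∀ n, 0 ≤ p n) (hle : ∀ n, p n ≤ 1)
    (hm : Multipliable p) (N : ℕ) : ∏' n, p n ≤ ∏ k ∈ Finset.range N, p k := by
  refine le_of_tendsto hm.hasProd.tendsto_prod_nat ?_
  filter_upwards [Filter.eventually_ge_atTop N] with n hn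
  rw [← Finset.prod_range_mul_prod_Ico p hn]
  have h1 : ∏ k ∈ Finset.Ico N n, p k ≤ 1 :=
    Finset.prod_le_one (fun i _ => hpos i) (fun i _ => hle i)
  have h2 : 0 ≤ ∏ k ∈ Finset.range N, p k := Finset.prod_nonneg fun i _ => hpos i
  simpa using mul_le_of_le_one_right h2 h1

/-- In the superlinear fitness-weighted Pólya urn, the probability that color `0` is
chosen at every step is at least `∏_{n≥1} F_0 n^β / (F_0 n^β + ∑_{j≥1} F_j)`; moreover,
if `F_0 ≥ ε ∑_j F_j`, then it is at least `∏_{n≥1} (1 - 1/(1 + ε n^β)) > 0`. -/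
theorem urn_color_always_chosen {Ω : Type*} [m0 : MeasurableSpace Ω] (μ : Measure Ω)
    [IsProbabilityMeasure μ] (d : ℕ) (hd : 2 ≤ d) (F : Fin d → ℝ)
    (hF : ∀ j, 0 < F j) (β : ℝ) (hβ : 1 < β)
    (ℱ : Filtration ℕ m0) (W : ℕ → Ω → Fin d → ℕ)
    (hadapted : ∀ n, Measurable[ℱ n] (W n))
    (hinit : ∀ ω, W 0 ω = fun _ => 1)
    (hstep : ∀ n ω, ∃ j : Fin d, W (n + 1) ω = Function.update (W n ω) j (W n ω j + 1))
    (hcond : ∀ (n : ℕ) (j : Fin d),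
      (μ⟦{ω' | W (n + 1) ω' j = W n ω' j + 1} | ℱ n⟧)
        =ᵐ[μ] fun ω =>
          (F j * (W n ω j : ℝ) ^ β) / ∑ k, F k * (W n ω k : ℝ) ^ β) :
    ENNReal.ofReal (∏' n : ℕ,
        (F ⟨0, by omega⟩ * ((n : ℝ) + 1) ^ β) /
          (F ⟨0, by omega⟩ * ((n : ℝ) + 1) ^ β +
            ∑ j ∈ Finset.univ.erase (⟨0, by omega⟩ : Fin d), F j))
      ≤ μ (⋂ n : ℕ, {ω | W (n + 1) ω ⟨0, by omega⟩ = W n ω ⟨0, by omega⟩ + 1}) ∧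
    ∀ ε : ℝ, 0 < ε → F ⟨0, by omega⟩ ≥ ε * ∑ j, F j →
      ENNReal.ofReal (∏' n : ℕ, (1 - 1 / (1 + ε * ((n : ℝ) + 1) ^ β)))
          ≤ μ (⋂ n : ℕ, {ω | W (n + 1) ω ⟨0, by omega⟩ = W n ω ⟨0, by omega⟩ + 1}) ∧
        0 < ∏' n : ℕ, (1 - 1 / (1 + ε * ((n : ℝ) + 1) ^ β)) := by
  have hd0 : 0 < d := by omega
  set x0 : Fin d := ⟨0, hd0⟩ with hx0
  set S : ℝ := ∑ j ∈ Finset.univ.erase x0, F j with hS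
  set A : ℕ → Set Ω := fun n => {ω | W (n + 1) ω x0 = W n ω x0 + 1} with hA
  set B : ℕ → Set Ω := fun n => ⋂ (k : ℕ), ⋂ (_ : k < n), A k with hB
  set p : ℕ → ℝ := fun n =>
    (F x0 * ((n : ℝ) + 1) ^ β) / (F x0 * ((n : ℝ) + 1) ^ β + S) with hp
  -- basic positivity
  have hSpos : 0 < S := by
    refine Finset.sum_pos (fun j _ => hF j) ?_
    refine ⟨⟨1, by omega⟩, Finset.mem_erase.2 ⟨?_, Finset.mem_univ _⟩⟩
    simp [hx0, Fin.ext_iff]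
  have htpos : ∀ n : ℕ, (0 : ℝ) < ((n : ℝ) + 1) ^ β := fun n =>
    Real.rpow_pos_of_pos (by positivity) β
  have hden : ∀ n : ℕ, (0 : ℝ) < F x0 * ((n : ℝ) + 1) ^ β + S := fun n => by
    have := htpos n; have := hF x0; positivity
  have hppos : ∀ n, 0 < p n := fun n => div_pos (by have := htpos n; have := hF x0; positivity) (hden n)
  have hple : ∀ n, p n ≤ 1 := fun n =>
    div_le_one_of_le₀ (by linarith [hSpos]) (hden n).le
  have hpbd : ∀ n, (p n)⁻¹ - 1 ≤ (S / F x0) / ((n : ℝ) + 1) ^ β := by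
    intro n
    have h1 := htpos n
    have h2 := hF x0
    rw [hp]
    rw [inv_div]
    rw [div_sub_one (by positivity), div_div]
    have : F x0 * ((n : ℝ) + 1) ^ β + S - F x0 * ((n : ℝ) + 1) ^ β = S := by ring
    rw [this]
  have hplog : Summable fun n => Real.log (p n) :=
    aux_summable_log p (S / F x0) β hβ hppos hple hpbd
  have hpProd : HasProd p (Real.exp (∑' n, Real.log (p n))) :=
    aux_hasProd p hppos hplog
  -- measurability
  have hAmeas : ∀ k, MeasurableSet[ℱ (k + 1)] (A k) := by
    intro k
    have hf : Measurable[ℱ (k + 1)] fun ω => W (k + 1) ω x0 :=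
      (measurable_pi_apply x0).comp (hadapted (k + 1))
    have hg : Measurable[ℱ (k + 1)] fun ω => W k ω x0 + 1 :=
      (((measurable_pi_apply x0).comp (hadapted k)).mono (ℱ.mono (Nat.le_succ k)) le_rfl).add
        measurable_const
    exact measurableSet_eq_fun hf hg
  have hAmeas0 : ∀ k, MeasurableSet (A k) := fun k => ℱ.le (k + 1) _ (hAmeas k)
  have hBmeas : ∀ n, MeasurableSet[ℱ n] (B n) := by
    intro n
    refine MeasurableSet.iInter fun k => MeasurableSet.iInter fun hk => ?_
    exact ℱ.mono hk _ (hAmeas k)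
  have hBmeas0 : ∀ n, MeasurableSet (B n) := fun n => ℱ.le n _ (hBmeas n)
  have hmemB : ∀ n ω, ω ∈ B n ↔ ∀ k, k < n → ω ∈ A k := by
    intro n ω; simp [hB, Set.mem_iInter]
  -- weights on the event B n
  have hWB : ∀ n ω, ω ∈ B n → ∀ j, W n ω j = if j = x0 then n + 1 else 1 := by
    intro n
    induction n with
    | zero => intro ω _ j; rw [hinit ω]; simp
    | succ n ih =>
      intro ω hω j
      have hωB : ω ∈ B n := (hmemB n ω).2 fun k hk => (hmemB (n + 1) ω).1 hω k (by omega)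
      have hωA : ω ∈ A n := (hmemB (n + 1) ω).1 hω n (by omega)
      obtain ⟨i, hi⟩ := hstep n ω
      have hωA' : W (n + 1) ω x0 = W n ω x0 + 1 := hωA
      have hix : i = x0 := by
        by_contra hne
        have : W (n + 1) ω x0 = W n ω x0 := by
          rw [hi, Function.update_of_ne (fun h => hne h.symm)]
        omega
      subst hix
      rw [hi]
      by_cases hj : j = x0
      · subst hj
        rw [Function.update_self, ih ω hωB x0]
        simp
      · rw [Function.update_of_ne hj, ih ω hωB j]
        simp [hj]
  -- conditional probability value on B n
  have hgval : ∀ n ω, ω ∈ B n →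
      (F x0 * (W n ω x0 : ℝ) ^ β) / ∑ k, F k * (W n ω k : ℝ) ^ β = p n := by
    intro n ω hω
    have h1 : (W n ω x0 : ℝ) = (n : ℝ) + 1 := by
      rw [hWB n ω hω x0]; push_cast; simp
    have hden' : (∑ k, F k * (W n ω k : ℝ) ^ β) = F x0 * ((n : ℝ) + 1) ^ β + S := by
      rw [← Finset.add_sum_erase _ _ (Finset.mem_univ x0), h1]
      congr 1
      refine Finset.sum_congr rfl fun k hk => ?_
      have hk' : k ≠ x0 := Finset.ne_of_mem_erase hk
      rw [hWB n ω hω k, if_neg hk']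
      simp
    rw [h1, hden']
  -- B (n+1) = A n ∩ B n
  have hBsucc : ∀ n, B (n + 1) = A n ∩ B n := by
    intro n
    ext ω
    simp only [Set.mem_inter_iff, hmemB]
    constructor
    · intro h; exact ⟨h n (by omega), fun k hk => h k (by omega)⟩
    · rintro ⟨h1, h2⟩ k hk
      rcases Nat.lt_succ_iff_lt_or_eq.1 hk with h | h
      · exact h2 k h
      · subst h; exact h1
  -- the key recursion
  have hkey : ∀ n, μ (B (n + 1)) = ENNReal.ofReal (p n) * μ (B n) := by
    intro n
    have hint : Integrable ((A n).indicator fun _ => (1 : ℝ)) μ :=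
      (integrable_const (1 : ℝ)).indicator (hAmeas0 n)
    have h1 : ∫ ω in B n, (μ⟦A n | ℱ n⟧) ω ∂μ
        = ∫ ω in B n, (A n).indicator (fun _ => (1 : ℝ)) ω ∂μ :=
      setIntegral_condExp (ℱ.le n) hint (hBmeas n)
    have h2 : ∫ ω in B n, (A n).indicator (fun _ => (1 : ℝ)) ω ∂μ
        = (μ (A n ∩ B n)).toReal := by
      rw [integral_indicator (hAmeas0 n)]
      simp [Measure.real, Measure.restrict_apply (hAmeas0 n)]
    have h3 : ∫ ω in B n, (μ⟦A n | ℱ n⟧) ω ∂μ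
        = ∫ ω in B n,
            (F x0 * (W n ω x0 : ℝ) ^ β) / ∑ k, F k * (W n ω k : ℝ) ^ β ∂μ := by
      refine setIntegral_congr_ae (hBmeas0 n) ?_
      filter_upwards [hcond n x0] with ω hω _
      exact hω
    have h4 : ∫ ω in B n,
          (F x0 * (W n ω x0 : ℝ) ^ β) / ∑ k, F k * (W n ω k : ℝ) ^ β ∂μ
        = p n * (μ (B n)).toReal := by
      rw [setIntegral_congr_fun (hBmeas0 n) fun ω hω => hgval n ω hω]
      simp [mul_comm, Measure.real]
    have h5 : (μ (A n ∩ B n)).toReal = p n * (μ (B n)).toReal := by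
      rw [← h2, ← h1, h3, h4]
    rw [hBsucc n, ← ENNReal.ofReal_toReal (measure_ne_top μ (A n ∩ B n)), h5,
      ENNReal.ofReal_mul (hppos n).le, ENNReal.ofReal_toReal (measure_ne_top μ (B n))]
  -- closed form
  have hμB : ∀ n, μ (B n) = ENNReal.ofReal (∏ k ∈ Finset.range n, p k) := by
    intro n
    induction n with
    | zero =>
      have : B 0 = Set.univ := by
        ext ω; simp [hmemB]
      simp [this]
    | succ n ih =>
      rw [hkey n, ih, Finset.prod_range_succ, ← ENNReal.ofReal_mul (hppos n).le, mul_comm]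
  -- intersection identity
  have hIA : (⋂ n, A n) = ⋂ n, B n := by
    ext ω
    simp only [Set.mem_iInter, hmemB]
    exact ⟨fun h n k _ => h k, fun h k => h (k + 1) k (by omega)⟩
  have hBanti : Antitone B := by
    intro a b hab
    intro ω hω
    exact (hmemB a ω).2 fun k hk => (hmemB b ω).1 hω k (lt_of_lt_of_le hk hab)
  have hmeasInter : μ (⋂ n, A n) = ⨅ n, μ (B n) := by
    rw [hIA]
    exact Directed.measure_iInter (fun n => (hBmeas0 n).nullMeasurableSet)
      (hBanti.directed_ge) ⟨0, measure_ne_top μ _⟩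
  have hpart1 : ENNReal.ofReal (∏' n, p n) ≤ μ (⋂ n, A n) := by
    rw [hmeasInter]
    refine le_iInf fun n => ?_
    rw [hμB n]
    exact ENNReal.ofReal_le_ofReal
      (aux_tprod_le_partial p (fun k => (hppos k).le) hple hpProd.multipliable n)
  constructor
  · exact hpart1
  · intro ε hε hFε
    set r : ℕ → ℝ := fun n => 1 - 1 / (1 + ε * ((n : ℝ) + 1) ^ β) with hr
    have hrden : ∀ n : ℕ, (0 : ℝ) < 1 + ε * ((n : ℝ) + 1) ^ β := fun n => by
      have := htpos n; positivity
    have hrpos : ∀ n, 0 < r n := by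
      intro n
      have h1 : 1 / (1 + ε * ((n : ℝ) + 1) ^ β) < 1 := by
        rw [div_lt_one (hrden n)]
        nlinarith [htpos n]
      simp only [hr]; linarith
    have hrle : ∀ n, r n ≤ 1 := by
      intro n
      have : 0 ≤ 1 / (1 + ε * ((n : ℝ) + 1) ^ β) := by positivity
      simp only [hr]; linarith
    have hrbd : ∀ n, (r n)⁻¹ - 1 ≤ (1 / ε) / ((n : ℝ) + 1) ^ β := by
      intro n
      have h1 := htpos n
      have h2 := hrden n
      have hrn : r n = (ε * ((n : ℝ) + 1) ^ β) / (1 + ε * ((n : ℝ) + 1) ^ β) := by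
        simp only [hr]; rw [eq_div_iff h2.ne', sub_mul, one_div, inv_mul_cancel₀ h2.ne']; ring
      rw [hrn, inv_div, div_sub_one (by positivity)]
      have hrd : (1:ℝ) / ε / ((n : ℝ) + 1) ^ β = 1 / (ε * ((n : ℝ) + 1) ^ β) := by
        rw [div_div]
      have : 1 + ε * ((n : ℝ) + 1) ^ β - ε * ((n : ℝ) + 1) ^ β = 1 := by ring
      rw [hrd, this]
    have hrlog : Summable fun n => Real.log (r n) :=
      aux_summable_log r (1 / ε) β hβ hrpos hrle hrbd
    have hrProd : HasProd r (Real.exp (∑' n, Real.log (r n))) :=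
      aux_hasProd r hrpos hrlog
    -- termwise r n ≤ p n
    have hSle : ε * S ≤ F x0 := by
      have h1 : S ≤ ∑ j, F j := by
        refine Finset.sum_le_sum_of_subset_of_nonneg (Finset.erase_subset _ _)
          fun j _ _ => (hF j).le
      calc ε * S ≤ ε * ∑ j, F j := by nlinarith
        _ ≤ F x0 := hFε
    have hrp' : ∀ n, r n ≤ p n := by
      intro n
      have h1 := htpos n
      have h2 := hrden n
      have h3 := hden n
      have hrn : r n = (ε * ((n : ℝ) + 1) ^ β) / (1 + ε * ((n : ℝ) + 1) ^ β) := by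
        simp only [hr]; rw [eq_div_iff h2.ne', sub_mul, one_div, inv_mul_cancel₀ h2.ne']; ring
      rw [hrn, hp, div_le_div_iff₀ h2 h3]
      have hF0 := hF x0
      nlinarith [mul_le_mul_of_nonneg_right hSle h1.le, mul_pos (mul_pos hε h1) (mul_pos hF0 h1)]
    have hrtp : (∏' n, r n) ≤ ∏' n, p n := by
      rw [hrProd.tprod_eq, hpProd.tprod_eq]
      refine Real.exp_le_exp.2 (Summable.tsum_le_tsum (fun n => ?_) hrlog hplog)
      exact Real.log_le_log (hrpos n) (hrp' n)
    refine ⟨le_trans (ENNReal.ofReal_le_ofReal hrtp) hpart1, ?_⟩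
    rw [hrProd.tprod_eq]
    exact Real.exp_pos _
end

section
/- Let a > 1, ε₁ = (a-1)/8 and let z be an integer with a^h < |z| ≤ 4a^h/(a-1). Define h₁ = min{h' ≥ h : |z| + 2ε₁ ∑_{i=h}^{h'-1} a^i ≤ a^{h'}/2}. Then |z| ≥ a^{h₁-1}/4 and consequently h₁ - h - 1 ≤ log_a(16/(a-1)). -/
/-- With `ε₁ = (a-1)/8` and `a^h < |z| ≤ 4a^h/(a-1)`, the first layer
`h₁ = min{h' ≥ h : |z| + 2ε₁ ∑_{i=h}^{h'-1} a^i ≤ a^{h'}/2}` satisfies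
`|z| ≥ a^{h₁-1}/4` and consequently `h₁ - h - 1 ≤ log_a(16/(a-1))`. -/
theorem first_good_layer_bound (a : ℝ) (ha : 1 < a) (h : ℕ) (z : ℤ)
    (hz1 : a ^ h < (|z| : ℝ)) (hz2 : (|z| : ℝ) ≤ 4 * a ^ h / (a - 1))
    (h₁ : ℕ) (hh₁ : h ≤ h₁)
    (hmem : (|z| : ℝ) + 2 * ((a - 1) / 8) * ∑ i ∈ Finset.Ico h h₁, a ^ i ≤ a ^ h₁ / 2)
    (hmin : ∀ h' : ℕ, h ≤ h' → h' < h₁ →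
      ¬((|z| : ℝ) + 2 * ((a - 1) / 8) * ∑ i ∈ Finset.Ico h h', a ^ i ≤ a ^ h' / 2)) :
    a ^ (h₁ - 1) / 4 ≤ (|z| : ℝ) ∧
      (h₁ : ℝ) - (h : ℝ) - 1 ≤ Real.logb a (16 / (a - 1)) := by
  have ha0 : (0:ℝ) < a := by linarith
  have ha1 : (0:ℝ) < a - 1 := by linarith
  have hph : (0:ℝ) < a ^ h := pow_pos ha0 h
  -- h < h₁
  have hlt : h < h₁ := by
    rcases lt_or_eq_of_le hh₁ with h' | h'
    · exact h'
    · exfalso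
      rw [← h', Finset.Ico_self, Finset.sum_empty, mul_zero, add_zero] at hmem
      linarith
  -- minimality at h₁ - 1
  have hm := hmin (h₁ - 1) (by omega) (by omega)
  push_neg at hm
  rw [geom_sum_Ico (by linarith : a ≠ 1) (by omega : h ≤ h₁ - 1)] at hm
  have e : 2 * ((a - 1) / 8) * ((a ^ (h₁ - 1) - a ^ h) / (a - 1))
      = (a ^ (h₁ - 1) - a ^ h) / 4 := by
    field_simp
    ring
  rw [e] at hm
  have claim1 : a ^ (h₁ - 1) / 4 ≤ (|z| : ℝ) := by linarith
  refine ⟨claim1, ?_⟩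
  -- a ^ (h₁ - 1 - h) ≤ 16 / (a - 1)
  set n := h₁ - 1 - h with hn
  have hsplit : a ^ (h₁ - 1) = a ^ n * a ^ h := by
    rw [← pow_add]
    congr 1
    omega
  have hbound : a ^ n ≤ 16 / (a - 1) := by
    have h1 : a ^ n * a ^ h / 4 ≤ 4 * a ^ h / (a - 1) := by
      rw [← hsplit]; linarith
    rw [div_le_div_iff₀ (by norm_num) ha1] at h1
    rw [le_div_iff₀ ha1]
    nlinarith [mul_pos hph ha1]
  have hlogb : (n : ℝ) ≤ Real.logb a (16 / (a - 1)) := by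
    rw [Real.le_logb_iff_rpow_le ha (by positivity)]
    rw [Real.rpow_natCast]
    exact hbound
  have : ((n : ℕ) : ℝ) = (h₁ : ℝ) - h - 1 := by
    have : n + h + 1 = h₁ := by omega
    have := congrArg (fun k : ℕ => (k : ℝ)) this
    push_cast at this
    linarith
  linarith
end
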